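/- arXiv:2407.02375 — 3 statements merged into one kernel-verified Lean document; each statement's English description precedes it below -/
import Mathlib

section
/- If f ∈ Poly is homogeneous of degree k, then f = Σ_{(i₁ ≤ ⋯ ≤ i_k)} c_{(i₁,…,i_k)} · 𝔉_{(i₁,…,i_k)}, where the sum is over weakly increasing sequences of positive integers of length k and c_{(i₁,…,i_k)} is the integer to which the constant polynomial D_{i₁}(D_{i₂}(⋯(D_{i_k}(f))⋯)) is equal; only finitely many of these coefficients are nonzero. -/
/-
Conventions: `Pol = MvPolynomial ℕ ℤ` with the Lean variable `X i` representing
the paper's variable `x_{i+1}` (0-indexed).  All operators carrying a paper index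
`i ≥ 1` are represented by Lean operators indexed by `i : ℕ` (Lean `i` ↔ paper `i+1`),
and sequences of positive integers are represented by sequences of natural numbers
(entry `v` ↔ paper entry `v+1`).
-/

open MvPolynomial
open scoped Classical

abbrev Pol := MvPolynomial ℕ ℤ

noncomputable section

/-- Interchange the variables `x_{i+1}` and `x_{i+2}` (paper indexing). -/
def swapVar (i : ℕ) (f : Pol) : Pol := rename (Equiv.swap i (i+1)) f

/-- Exact division: the unique `g` with `d * g = f` when it exists (`0` otherwise). -/
def exactDiv (d f : Pol) : Pol := if h : ∃ g : Pol, d * g = f then h.choose else 0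

/-- The divided difference operator `∂_{i+1}` (paper indexing). -/
def ddiff (i : ℕ) (f : Pol) : Pol := exactDiv (X i - X (i+1)) (f - swapVar i f)

/-- The Bergeron–Sottile operator `R_{i+1}` (paper indexing): `x_j ↦ x_j` for
`j < i+1`, `x_{i+1} ↦ 0`, `x_j ↦ x_{j-1}` for `j > i+1`. -/
def BS (i : ℕ) : Pol →ₐ[ℤ] Pol :=
  aeval fun j => if j < i then X j else if j = i then 0 else X (j-1)

/-- `m`-fold iterate of `BS i`. -/
def BSit (i m : ℕ) (f : Pol) : Pol := (fun g => BS i g)^[m] f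

/-- `Z g = Σ_{k ≥ 0} R₁ᵏ g`. -/
def Zop (f : Pol) : Pol := ∑ᶠ k : ℕ, BSit 0 k f

/-- `Z^{(m)} g = Σ_{k ≥ 0} R₁^{km} g`. -/
def Zm (m : ℕ) (f : Pol) : Pol := ∑ᶠ k : ℕ, BSit 0 (k * m) f

/-- The truncation operator keeping the first `n` variables: `Π_n` in paper indexing. -/
def truncOp (n : ℕ) : Pol →ₐ[ℤ] Pol := aeval fun j => if j < n then X j else 0

/-- The quasisymmetric divided difference `T_{i+1}` defined as the exact quotient
`((R_{i+2} - R_{i+1})f)/x_{i+1}` (paper indexing). -/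
def TqDiv (i : ℕ) (f : Pol) : Pol := exactDiv (X i) (BS (i+1) f - BS i f)

/-- The quasisymmetric divided difference `T_{i+1} = R_{i+1} ∘ ∂_{i+1}` (paper indexing). -/
def Tq (i : ℕ) (f : Pol) : Pol := BS i (ddiff i f)

/-- The `m`-quasisymmetric divided difference `T^{(m)}_{i+1}` (paper indexing). -/
def Tm (m i : ℕ) (f : Pol) : Pol := exactDiv (X i) (BSit (i+1) m f - BSit i m f)

/-- The slide extractor `D_{i+1} = Π_{i+1} ∘ ∂_{i+1}` (paper indexing). -/
def Dop (i : ℕ) (f : Pol) : Pol := truncOp (i+1) (ddiff i f)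

/-- The `m`-slide extractor `D^{(m)}_{i+1} = Π_{i+1} ∘ T^{(m)}_{i+1}` (paper indexing). -/
def Dm (m i : ℕ) (f : Pol) : Pol := truncOp (i+1) (Tm m i f)

/-- The slide creator `B_{i+1} f = Σ_{k=1}^{i+1} x_k · R_k^{i+1-k}(Π_{i+1} f)` (paper indexing). -/
def Bop (i : ℕ) (f : Pol) : Pol :=
  ∑ k ∈ Finset.range (i+1), X k * BSit k (i - k) (truncOp (i+1) f)

/-- The creation operator `Z ∘ x_{i+1} ∘ R_{i+1}` (paper indexing). -/
def crea (i : ℕ) (f : Pol) : Pol := Zop (X i * BS i f)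

/-- A permutation of `{0,1,2,…}` is finitely supported if it fixes all but
finitely many points. -/
def FinSupp (w : Equiv.Perm ℕ) : Prop := Set.Finite {x | w x ≠ x}

/-- Coxeter length: the minimal `k` such that `w` is a product of `k` simple
transpositions. -/
def len (w : Equiv.Perm ℕ) : ℕ :=
  sInf {k | ∃ l : List ℕ, l.length = k ∧ (l.map fun i => Equiv.swap i (i+1)).prod = w}

/-- The set of reduced words for `w`. -/
def Red (w : Equiv.Perm ℕ) : Set (List ℕ) :=
  {l | l.length = len w ∧ (l.map fun i => Equiv.swap i (i+1)).prod = w}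

/-- A family of polynomials indexed by permutations is a family of Schubert
polynomials if: each member is homogeneous of degree the length, the identity is
sent to `1`, and divided differences act as expected (all this for finitely
supported permutations). -/
def IsSchubertFamily (S : Equiv.Perm ℕ → Pol) : Prop :=
  (∀ w, FinSupp w → (S w).IsHomogeneous (len w)) ∧
  S 1 = 1 ∧
  ∀ w, FinSupp w → ∀ i : ℕ,
    ddiff i (S w) = if w (i+1) < w i then S (w * Equiv.swap i (i+1)) else 0

/-- `b` is a compatible sequence for `a`. -/
def Compat {k : ℕ} (a b : Fin k → ℕ) : Prop :=
  Monotone b ∧ (∀ j, b j ≤ a j) ∧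
  ∀ (j : ℕ) (h : j + 1 < k),
    a ⟨j, Nat.lt_of_succ_lt h⟩ < a ⟨j+1, h⟩ → b ⟨j, Nat.lt_of_succ_lt h⟩ < b ⟨j+1, h⟩

/-- The slide polynomial `𝔉_a`, as the sum of the monomials of all compatible
sequences for `a`. -/
def slide {k : ℕ} (a : Fin k → ℕ) : Pol :=
  ∑ᶠ b ∈ {b : Fin k → ℕ | Compat a b}, ∏ j, X (b j)

/-- `b` is an `m`-compatible sequence for `a` (entrywise congruent mod `m`). -/
def MCompat (m : ℕ) {k : ℕ} (a b : Fin k → ℕ) : Prop :=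
  Monotone b ∧ (∀ j, b j ≤ a j ∧ b j % m = a j % m) ∧
  ∀ (j : ℕ) (h : j + 1 < k),
    a ⟨j, Nat.lt_of_succ_lt h⟩ < a ⟨j+1, h⟩ → b ⟨j, Nat.lt_of_succ_lt h⟩ < b ⟨j+1, h⟩

/-- The `m`-slide polynomial `𝔉ᵐ_a`. -/
def mslide (m : ℕ) {k : ℕ} (a : Fin k → ℕ) : Pol :=
  ∑ᶠ b ∈ {b : Fin k → ℕ | MCompat m a b}, ∏ j, X (b j)

/-- Value of the `m`-slide creator `B^{(m)}_{a+1}` (paper indexing) on the monomial with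
exponent vector `d`. -/
def BmMono (m a : ℕ) (d : ℕ →₀ ℕ) : Pol :=
  if ∃ t, a < t ∧ d t ≠ 0 then 0
  else monomial (d.erase a) 1 *
    ∑ r ∈ Finset.range (a+1),
      if r * m ≤ a ∧ ∀ t, t < a → d t ≠ 0 → t < a - r * m then
        X (a - r * m) ^ (d a + 1) else 0

/-- The `m`-slide creator `B^{(m)}_{a+1}` (paper indexing), extended linearly from
its values on monomials. -/
def Bm (m a : ℕ) (f : Pol) : Pol := ∑ d ∈ f.support, C (f.coeff d) * BmMono m a d

end

noncomputable section


lemma exactDiv_eq {d f g : Pol} (hd : d ≠ 0) (h : d * g = f) : exactDiv d f = g := by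
  have hex : ∃ g : Pol, d * g = f := ⟨g, h⟩
  rw [exactDiv, dif_pos hex]
  exact mul_left_cancel₀ hd (hex.choose_spec.trans h.symm)

lemma X_sub_ne (i : ℕ) : (X i - X (i+1) : Pol) ≠ 0 := by
  intro h
  have := congrArg (eval fun t => if t = i then (1:ℤ) else 0) h
  simp at this

lemma swapVar_add (i : ℕ) (f g : Pol) : swapVar i (f + g) = swapVar i f + swapVar i g := map_add _ _ _
lemma swapVar_mul (i : ℕ) (f g : Pol) : swapVar i (f * g) = swapVar i f * swapVar i g := map_mul _ _ _

lemma dvd_sub_swap (i : ℕ) (f : Pol) : (X i - X (i+1)) ∣ (f - swapVar i f) := by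
  induction f using MvPolynomial.induction_on with
  | C a => simp [swapVar]
  | add p q hp hq =>
    have : p + q - swapVar i (p + q) = (p - swapVar i p) + (q - swapVar i q) := by
      rw [swapVar_add]; ring
    rw [this]; exact dvd_add hp hq
  | mul_X p n hp =>
    have key : p * X n - swapVar i (p * X n)
        = (p - swapVar i p) * X n + swapVar i p * (X n - X (Equiv.swap i (i+1) n)) := by
      rw [swapVar_mul]; rw [show swapVar i (X n) = X (Equiv.swap i (i+1) n) from by rw [swapVar, rename_X]]; ring
    rw [key]
    refine dvd_add (Dvd.dvd.mul_right hp _) (Dvd.dvd.mul_left ?_ _)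
    rcases eq_or_ne n i with rfl | hni
    · simp
    rcases eq_or_ne n (i+1) with rfl | hni1
    · rw [Equiv.swap_apply_right]
      rw [show X i.succ - X i = -(X i - X (i+1) : Pol) by ring]
      exact dvd_neg.2 dvd_rfl
    · rw [Equiv.swap_apply_of_ne_of_ne hni hni1, sub_self]
      exact dvd_zero _

lemma ddiff_spec (i : ℕ) (f : Pol) : (X i - X (i+1)) * ddiff i f = f - swapVar i f := by
  obtain ⟨g, hg⟩ := dvd_sub_swap i f
  have hex : ∃ g : Pol, (X i - X (i+1)) * g = f - swapVar i f := ⟨g, hg.symm⟩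
  rw [ddiff, exactDiv, dif_pos hex]
  exact hex.choose_spec

lemma ddiff_eq {i : ℕ} {f g : Pol} (h : (X i - X (i+1)) * g = f - swapVar i f) :
    ddiff i f = g := exactDiv_eq (X_sub_ne i) h

lemma ddiff_add (i : ℕ) (f g : Pol) : ddiff i (f + g) = ddiff i f + ddiff i g := by
  refine ddiff_eq ?_
  rw [mul_add, ddiff_spec, ddiff_spec, swapVar_add]; ring

lemma ddiff_smul (i : ℕ) (z : ℤ) (f : Pol) : ddiff i (z • f) = z • ddiff i f := by
  refine ddiff_eq ?_
  rw [swapVar, map_smul, ← swapVar]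
  rw [← smul_sub, mul_smul_comm, ddiff_spec]

lemma ddiff_zero (i : ℕ) : ddiff i (0 : Pol) = 0 := by
  refine ddiff_eq ?_; simp [swapVar]

lemma Dop_add (i : ℕ) (f g : Pol) : Dop i (f + g) = Dop i f + Dop i g := by
  rw [Dop, Dop, Dop, ddiff_add, map_add]

lemma Dop_smul (i : ℕ) (z : ℤ) (f : Pol) : Dop i (z • f) = z • Dop i f := by
  rw [Dop, Dop, ddiff_smul, map_smul]

lemma Dop_zero (i : ℕ) : Dop i (0 : Pol) = 0 := by
  rw [Dop, ddiff_zero, map_zero]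

lemma ddiff_fix_mul {i : ℕ} {h0 : Pol} (hfix : swapVar i h0 = h0) (f : Pol) :
    ddiff i (h0 * f) = h0 * ddiff i f := by
  refine ddiff_eq ?_
  rw [swapVar_mul, hfix, mul_left_comm, ddiff_spec]; ring

lemma swapVar_X_pow (i t : ℕ) (p : ℕ) :
    swapVar i (X t ^ p) = X (Equiv.swap i (i+1) t) ^ p := by
  rw [swapVar, map_pow, rename_X]

lemma ddiff_X_pow (i p : ℕ) :
    ddiff i (X i ^ p) = ∑ t ∈ Finset.range p, X i ^ t * X (i+1) ^ (p - 1 - t) := by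
  refine ddiff_eq ?_
  rw [swapVar_X_pow, Equiv.swap_apply_left, mul_comm, geom_sum₂_mul]

lemma ddiff_X1_pow (i p : ℕ) :
    ddiff i (X (i+1) ^ p) = -∑ t ∈ Finset.range p, X i ^ t * X (i+1) ^ (p - 1 - t) := by
  refine ddiff_eq ?_
  rw [swapVar_X_pow, Equiv.swap_apply_right, mul_neg, mul_comm, geom_sum₂_mul]; ring

lemma truncOp_X (n t : ℕ) : truncOp n (X t) = if t < n then X t else 0 := by
  rw [truncOp, aeval_X]



def mono {k : ℕ} (b : Fin k → ℕ) : Pol := ∏ j, X (b j)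

lemma swapVar_mono {k i : ℕ} (b : Fin k → ℕ) :
    swapVar i (mono b) = ∏ j, X (Equiv.swap i (i+1) (b j)) := by
  rw [mono, swapVar, map_prod]
  exact Finset.prod_congr rfl fun j _ => rename_X _ _

lemma swapVar_mono_of_lt {k i : ℕ} {b : Fin k → ℕ} (h : ∀ l, b l < i) :
    swapVar i (mono b) = mono b := by
  rw [swapVar_mono, mono]
  refine Finset.prod_congr rfl fun j _ => ?_
  have := h j
  rw [Equiv.swap_apply_of_ne_of_ne (by omega : b j ≠ i) (by omega : b j ≠ i+1)]

lemma Dop_mono_all_lt {k i : ℕ} {b : Fin k → ℕ} (h : ∀ l, b l < i) :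
    Dop i (mono b) = 0 := by
  have : ddiff i (mono b) = 0 := ddiff_eq (by rw [swapVar_mono_of_lt h]; ring)
  rw [Dop, this, map_zero]

lemma Dop_mono_exists_gt {k i : ℕ} {b : Fin k → ℕ} {l₀ : Fin k} (h : i + 1 < b l₀) :
    Dop i (mono b) = 0 := by
  have hsplit : mono b = X (b l₀) * ∏ l ∈ Finset.univ.erase l₀, X (b l) :=
    (Finset.mul_prod_erase _ _ (Finset.mem_univ l₀)).symm
  have hfix : swapVar i (X (b l₀) : Pol) = X (b l₀) := by
    rw [swapVar, rename_X,
      Equiv.swap_apply_of_ne_of_ne (by omega : b l₀ ≠ i) (by omega : b l₀ ≠ i+1)]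
  rw [Dop, hsplit, ddiff_fix_mul hfix, map_mul, truncOp_X, if_neg (by omega), zero_mul]

lemma Dop_mono_both {k i : ℕ} {b : Fin k → ℕ} {l₁ l₂ : Fin k}
    (h1 : b l₁ = i) (h2 : b l₂ = i + 1) : Dop i (mono b) = 0 := by
  have hne : l₂ ≠ l₁ := by intro h; rw [h, h1] at h2; omega
  have hsplit : mono b
      = (X i * X (i+1)) * ∏ l ∈ (Finset.univ.erase l₁).erase l₂, X (b l) := by
    rw [mono, ← Finset.mul_prod_erase _ _ (Finset.mem_univ l₁), h1,
      ← Finset.mul_prod_erase _ _ (Finset.mem_erase.2 ⟨hne, Finset.mem_univ l₂⟩), h2]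
    ring
  have hfix : swapVar i ((X i * X (i+1)) : Pol) = X i * X (i+1) := by
    rw [swapVar, map_mul, rename_X, rename_X, Equiv.swap_apply_left, Equiv.swap_apply_right]
    ring
  rw [Dop, hsplit, ddiff_fix_mul hfix]
  simp [truncOp_X]

/-- Decomposition of a product of `X`'s whose indices are either `< i` or `= v`. -/
lemma mono_split {k : ℕ} (b : Fin k → ℕ) (i v : ℕ) (hiv : i ≤ v)
    (h : ∀ l, b l < i ∨ b l = v) :
    mono b = (∏ l, if b l < i then X (b l) else 1) *
      X v ^ (∑ l, if b l = v then 1 else 0) := by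
  rw [mono, ← Finset.prod_pow_eq_pow_sum, ← Finset.prod_mul_distrib]
  refine Finset.prod_congr rfl fun l _ => ?_
  rcases h l with hl | hl
  · rw [if_pos hl, if_neg (by omega), pow_zero, mul_one]
  · rw [hl, if_neg (by omega), if_pos rfl, pow_one, one_mul]

lemma swapVar_prefix {k i : ℕ} (b : Fin k → ℕ) :
    swapVar i (∏ l, if b l < i then X (b l) else 1) =
      ∏ l, if b l < i then X (b l) else 1 := by
  rw [swapVar, map_prod]
  refine Finset.prod_congr rfl fun l _ => ?_
  split_ifs with hl
  · rw [rename_X, Equiv.swap_apply_of_ne_of_ne (by omega : b l ≠ i) (by omega : b l ≠ i+1)]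
  · exact map_one _

lemma truncOp_prefix {k i : ℕ} (b : Fin k → ℕ) :
    truncOp (i+1) (∏ l, if b l < i then X (b l) else 1) =
      ∏ l, if b l < i then X (b l) else 1 := by
  rw [map_prod]
  refine Finset.prod_congr rfl fun l _ => ?_
  split_ifs with hl
  · rw [truncOp_X, if_pos (by omega)]
  · exact map_one _

lemma trunc_geom (i p : ℕ) :
    truncOp (i+1) (∑ t ∈ Finset.range p, X i ^ t * X (i+1) ^ (p - 1 - t)) =
      if p = 0 then 0 else X i ^ (p-1) := by
  rw [map_sum]
  have hterm : ∀ t ∈ Finset.range p,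
      truncOp (i+1) (X i ^ t * X (i+1) ^ (p - 1 - t)) =
        if t = p - 1 then X i ^ (p-1) else 0 := by
    intro t ht
    rw [Finset.mem_range] at ht
    rw [map_mul, map_pow, map_pow, truncOp_X, truncOp_X, if_pos (by omega), if_neg (by omega)]
    split_ifs with h
    · rw [h, show p - 1 - (p-1) = 0 by omega, pow_zero, mul_one]
    · rw [zero_pow (by omega), mul_zero]
  rw [Finset.sum_congr rfl hterm]
  rcases Nat.eq_zero_or_pos p with rfl | hp
  · simp
  · rw [Finset.sum_ite_eq' (Finset.range p) (p-1) (fun _ => X i ^ (p-1)),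
      if_pos (Finset.mem_range.2 (by omega)), if_neg (by omega)]

lemma Dop_mono_top_eq {k i : ℕ} {b : Fin (k+1) → ℕ}
    (hle : ∀ l, b l ≤ i) (hlast : b (Fin.last k) = i) :
    Dop i (mono b) = mono (b ∘ Fin.castSucc) := by
  have hcase : ∀ l, b l < i ∨ b l = i := fun l => by
    rcases lt_or_eq_of_le (hle l) with h | h
    exacts [Or.inl h, Or.inr h]
  have hsplit := mono_split b i i le_rfl hcase
  have hp1 : (∑ l : Fin (k+1), if b l = i then 1 else 0)
      = (∑ l : Fin k, if b l.castSucc = i then 1 else 0) + 1 := by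
    rw [Fin.sum_univ_castSucc, if_pos hlast]
  rw [Dop, hsplit, ddiff_fix_mul (swapVar_prefix b), ddiff_X_pow, map_mul, truncOp_prefix,
    trunc_geom, if_neg (by omega)]
  have hsplit' := mono_split (b ∘ Fin.castSucc) i i le_rfl (fun l => hcase _)
  rw [hsplit']
  congr 1
  · rw [Fin.prod_univ_castSucc, if_neg (by omega), mul_one]
    exact Finset.prod_congr rfl fun l _ => rfl
  · congr 1
    rw [hp1]
    simp only [Nat.add_sub_cancel, Function.comp_apply]

lemma Dop_mono_top_succ {k i : ℕ} {b : Fin (k+1) → ℕ}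
    (hle : ∀ l, b l ≤ i + 1) (hlast : b (Fin.last k) = i + 1) (hno : ∀ l, b l ≠ i) :
    Dop i (mono b) = -mono (fun l => min (b l.castSucc) i) := by
  have hcase : ∀ l, b l < i ∨ b l = i + 1 := fun l => by
    have := hle l; have := hno l; omega
  have hsplit := mono_split b i (i+1) (by omega) hcase
  have hq1 : (∑ l : Fin (k+1), if b l = i + 1 then 1 else 0)
      = (∑ l : Fin k, if b l.castSucc = i + 1 then 1 else 0) + 1 := by
    rw [Fin.sum_univ_castSucc, if_pos hlast]
  rw [Dop, hsplit, ddiff_fix_mul (swapVar_prefix b), ddiff_X1_pow, mul_neg, map_neg, map_mul,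
    truncOp_prefix, trunc_geom, if_neg (by omega)]
  rw [neg_inj]
  have hcase' : ∀ l : Fin k, min (b l.castSucc) i < i ∨ min (b l.castSucc) i = i := by
    intro l; rcases hcase l.castSucc with h | h
    · left; omega
    · right; omega
  have hsplit' := mono_split (fun l => min (b l.castSucc) i) i i le_rfl hcase'
  rw [hsplit']
  beta_reduce
  congr 1
  · rw [Fin.prod_univ_castSucc, if_neg (by omega), mul_one]
    refine Finset.prod_congr rfl fun l _ => ?_
    rcases hcase l.castSucc with h | h
    · rw [if_pos h, if_pos (by omega), show min (b l.castSucc) i = b l.castSucc by omega]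
    · rw [if_neg (by omega), if_neg (by omega)]
  · congr 1
    rw [hq1]
    simp only [Nat.add_sub_cancel]
    refine Finset.sum_congr rfl fun l _ => ?_
    rcases hcase l.castSucc with h | h
    · rw [if_neg (by omega), if_neg (by omega)]
    · rw [if_pos h, if_pos (by omega)]


def DopL (i : ℕ) : Pol →ₗ[ℤ] Pol where
  toFun := Dop i
  map_add' := Dop_add i
  map_smul' := Dop_smul i

lemma Dop_sum {α : Type*} (i : ℕ) (s : Finset α) (f : α → Pol) :
    Dop i (∑ x ∈ s, f x) = ∑ x ∈ s, Dop i (f x) := map_sum (DopL i) f s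

def CF {k : ℕ} (a : Fin k → ℕ) : Finset (Fin k → ℕ) :=
  (Fintype.piFinset fun j => Finset.range (a j + 1)).filter fun b => Compat a b

lemma mem_CF {k : ℕ} {a b : Fin k → ℕ} : b ∈ CF a ↔ Compat a b := by
  constructor
  · exact fun h => (Finset.mem_filter.1 h).2
  · intro h
    exact Finset.mem_filter.2 ⟨Fintype.mem_piFinset.2 fun j =>
      Finset.mem_range.2 (Nat.lt_succ_of_le (h.2.1 j)), h⟩

lemma slide_eq_sum {k : ℕ} (a : Fin k → ℕ) : slide a = ∑ b ∈ CF a, mono b := by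
  rw [slide, show {b : Fin k → ℕ | Compat a b} = ↑(CF a) from
    Set.ext fun b => by simp [mem_CF], finsum_mem_coe_finset]
  rfl

lemma exists_step {a : ℕ → ℕ} : ∀ {m l : ℕ}, l ≤ m → a l < a m →
    ∃ t, l ≤ t ∧ t < m ∧ a t < a (t+1) := by
  intro m
  induction m with
  | zero => intro l hl hlt; obtain rfl : l = 0 := Nat.le_zero.mp hl; omega
  | succ m ih =>
    intro l hl hlt
    rcases Nat.lt_or_ge (a m) (a (m+1)) with h | h
    · rcases Nat.lt_or_ge l (m+1) with h2 | h2
      · exact ⟨m, by omega, by omega, h⟩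
      · have : l = m + 1 := by omega
        subst this; omega
    · have hl' : l ≤ m := by
        rcases Nat.lt_or_ge l (m+1) with h2 | h2
        · omega
        · have : l = m + 1 := by omega
          subst this; omega
      obtain ⟨t, h1, h2, h3⟩ := ih hl' (by omega)
      exact ⟨t, h1, by omega, h3⟩

/-- If `b` is compatible with monotone `a`, `b l` equals the top value `b (last)`,
and the top value is less than `a (last)`, then `a l > b l`. -/
lemma compat_pos_bound {k : ℕ} {a b : Fin (k+1) → ℕ} (ha : Monotone a) (hc : Compat a b)
    {l : Fin (k+1)} (hbl : b l = b (Fin.last k)) (htop : b (Fin.last k) < a (Fin.last k)) :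
    b l < a l := by
  obtain ⟨hb, hle, hstrict⟩ := hc
  by_contra hcon
  have hal : a l = b l := le_antisymm (by omega) (hle l)
  -- a l < a last; find an ascent
  set A : ℕ → ℕ := fun t => a ⟨min t k, by omega⟩ with hA
  have hAl : A l.1 = a l := by
    simp only [hA]
    congr 1
    exact Fin.ext (by simp [Nat.min_eq_left (Nat.le_of_lt_succ l.2)])
  have hAk : A k = a (Fin.last k) := by
    simp only [hA]; congr 1; exact Fin.ext (by simp [Fin.last])
  have hlk : (l : ℕ) ≤ k := Nat.le_of_lt_succ l.2
  obtain ⟨t, ht1, ht2, ht3⟩ := exists_step (a := A) hlk (by rw [hAl, hAk]; omega)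
  have hAt : A t = a ⟨t, by omega⟩ := by
    simp only [hA]; congr 1; exact Fin.ext (by simp [Nat.min_eq_left (by omega : t ≤ k)])
  have hAt1 : A (t+1) = a ⟨t+1, by omega⟩ := by
    simp only [hA]; congr 1; exact Fin.ext (by simp [Nat.min_eq_left (by omega : t+1 ≤ k)])
  rw [hAt, hAt1] at ht3
  have hbt := hstrict t (by omega) ht3
  -- but b is constant from l to last
  have h1 : b l ≤ b ⟨t, by omega⟩ := hb (by
    rw [Fin.le_def]; simpa using ht1)
  have h2 : b ⟨t+1, by omega⟩ ≤ b (Fin.last k) := hb (by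
    rw [Fin.le_def]; simp [Fin.last]; omega)
  omega

def swfun (i x : ℕ) : ℕ := if x = i then i+1 else if x = i+1 then i else x

def ActiveP (i : ℕ) {k : ℕ} (b : Fin k → ℕ) : Prop :=
  (∀ l, b l ≤ i+1) ∧ ((∃ l, b l = i) ↔ ¬∃ l, b l = i+1)

def gfun (i : ℕ) {k : ℕ} (b : Fin k → ℕ) : Fin k → ℕ :=
  if ActiveP i b then swfun i ∘ b else b

lemma swfun_invol (i x : ℕ) : swfun i (swfun i x) = x := by
  unfold swfun; split_ifs <;> omega

lemma swfun_eq_i_iff (i x : ℕ) : swfun i x = i ↔ x = i + 1 := by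
  unfold swfun; split_ifs <;> omega

lemma swfun_eq_i1_iff (i x : ℕ) : swfun i x = i + 1 ↔ x = i := by
  unfold swfun; split_ifs <;> omega

lemma active_sw {i k : ℕ} {b : Fin k → ℕ} (hA : ActiveP i b) : ActiveP i (swfun i ∘ b) := by
  obtain ⟨h1, h2⟩ := hA
  constructor
  · intro l
    have := h1 l
    simp only [Function.comp_apply]
    unfold swfun; split_ifs <;> omega
  · simp only [Function.comp_apply, swfun_eq_i_iff, swfun_eq_i1_iff]
    tauto

lemma top_eq_of_le {k i : ℕ} {b : Fin (k+1) → ℕ} (hb : Monotone b)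
    (hle : ∀ l, b l ≤ i) (hex : ∃ l, b l = i) : b (Fin.last k) = i := by
  obtain ⟨l, hl⟩ := hex
  exact le_antisymm (hle _) (hl ▸ hb (Fin.le_last l))

lemma Dop_mono_nonactive {k i : ℕ} {b : Fin (k+1) → ℕ} (hna : ¬ActiveP i b) :
    Dop i (mono b) = 0 := by
  by_cases hbig : ∃ l, i + 1 < b l
  · obtain ⟨l, hl⟩ := hbig
    exact Dop_mono_exists_gt hl
  · push_neg at hbig
    by_cases he1 : ∃ l, b l = i
    · by_cases he2 : ∃ l, b l = i + 1
      · obtain ⟨l₁, h1⟩ := he1; obtain ⟨l₂, h2⟩ := he2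
        exact Dop_mono_both h1 h2
      · exact absurd ⟨hbig, by tauto⟩ hna
    · by_cases he2 : ∃ l, b l = i + 1
      · exact absurd ⟨hbig, by tauto⟩ hna
      · push_neg at he1; push_neg at he2
        exact Dop_mono_all_lt fun l => by have := hbig l; have := he1 l; have := he2 l; omega

lemma Dop_mono_case_i {k i : ℕ} {b : Fin (k+1) → ℕ} (hb : Monotone b)
    (hle : ∀ l, b l ≤ i) (hex : ∃ l, b l = i) :
    Dop i (mono b) = mono (b ∘ Fin.castSucc) :=
  Dop_mono_top_eq hle (top_eq_of_le hb hle hex)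

lemma Dop_mono_case_i1 {k i : ℕ} {b : Fin (k+1) → ℕ} (hb : Monotone b)
    (hle : ∀ l, b l ≤ i + 1) (hno : ∀ l, b l ≠ i) (hex : ∃ l, b l = i + 1) :
    Dop i (mono b) = -mono (fun l => min (b l.castSucc) i) := by
  refine Dop_mono_top_succ hle ?_ hno
  obtain ⟨l, hl⟩ := hex
  exact le_antisymm (hle _) (hl ▸ hb (Fin.le_last l))

lemma compat_sw {k i : ℕ} {a b : Fin (k+1) → ℕ} (ha : Monotone a) (hc : Compat a b)
    (hlt : i < a (Fin.last k)) (hA : ActiveP i b) : Compat a (swfun i ∘ b) := by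
  obtain ⟨hb, hble, hbs⟩ := hc
  obtain ⟨hA1, hA2⟩ := hA
  by_cases hx : ∃ l, b l = i + 1
  · -- no entry equal to i
    have hno : ∀ l, b l ≠ i := by
      intro l hl
      exact (hA2.1 ⟨l, hl⟩) hx
    refine ⟨?_, ?_, ?_⟩
    · intro u v huv
      have h1 := hb huv
      have := hno u; have := hno v; have := hA1 u; have := hA1 v
      simp only [Function.comp_apply]
      unfold swfun; split_ifs <;> omega
    · intro l
      have := hble l; have := hno l
      simp only [Function.comp_apply]
      unfold swfun; split_ifs <;> omega
    · intro j h hlt'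
      have hbs' := hbs j h hlt'
      have := hno ⟨j, by omega⟩; have := hno ⟨j+1, h⟩
      have := hA1 ⟨j, by omega⟩; have := hA1 ⟨j+1, h⟩
      simp only [Function.comp_apply]
      unfold swfun; split_ifs <;> omega
  · -- some entry equal to i, all entries ≤ i
    have hexi : ∃ l, b l = i := hA2.2 hx
    push_neg at hx
    have hle' : ∀ l, b l ≤ i := fun l => by have := hA1 l; have := hx l; omega
    have htop : b (Fin.last k) = i := top_eq_of_le hb hle' hexi
    have hkey : ∀ l, b l = i → i + 1 ≤ a l := by
      intro l hl
      have := compat_pos_bound ha ⟨hb, hble, hbs⟩ (hl.trans htop.symm) (by omega)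
      omega
    refine ⟨?_, ?_, ?_⟩
    · intro u v huv
      have h1 := hb huv
      have := hle' u; have := hle' v
      simp only [Function.comp_apply]
      unfold swfun; split_ifs <;> omega
    · intro l
      have := hble l; have := hle' l
      simp only [Function.comp_apply]
      by_cases hbl : b l = i
      · have := hkey l hbl
        unfold swfun; split_ifs <;> omega
      · unfold swfun; split_ifs <;> omega
    · intro j h hlt'
      have hbs' := hbs j h hlt'
      have := hle' ⟨j, by omega⟩; have := hle' ⟨j+1, h⟩
      simp only [Function.comp_apply]
      unfold swfun; split_ifs <;> omega

def ext1 {k : ℕ} (c : Fin k → ℕ) (i : ℕ) : Fin (k+1) → ℕ :=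
  fun l => if h : (l : ℕ) < k then c ⟨l, h⟩ else i

lemma ext1_castSucc {k : ℕ} (c : Fin k → ℕ) (i : ℕ) (l : Fin k) :
    ext1 c i l.castSucc = c l := by
  unfold ext1
  rw [dif_pos (show ((l.castSucc : Fin (k+1)) : ℕ) < k by simp)]
  exact congrArg c (Fin.ext (by simp))

lemma ext1_last {k : ℕ} (c : Fin k → ℕ) (i : ℕ) : ext1 c i (Fin.last k) = i := by
  unfold ext1
  rw [dif_neg (by simp [Fin.last])]

lemma ext1_mk_lt {k : ℕ} (c : Fin k → ℕ) (i : ℕ) {j : ℕ} (h2 : j < k) {h : j < k+1} :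
    ext1 c i ⟨j, h⟩ = c ⟨j, h2⟩ := by
  unfold ext1
  exact dif_pos h2

set_option maxHeartbeats 1000000 in
lemma Dop_slide {k : ℕ} (i : ℕ) {a : Fin (k+1) → ℕ} (ha : Monotone a) :
    Dop i (slide a) = if i = a (Fin.last k) then slide (a ∘ Fin.castSucc) else 0 := by
  rw [slide_eq_sum, Dop_sum]
  by_cases hi : i = a (Fin.last k)
  · rw [if_pos hi]
    have hterm : ∀ b ∈ CF a, Dop i (mono b)
        = if b (Fin.last k) = i then mono (b ∘ Fin.castSucc) else 0 := by
      intro b hb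
      obtain ⟨hbmono, hble, hbstrict⟩ := mem_CF.1 hb
      have hle' : ∀ l, b l ≤ i := fun l => le_trans (hble l) (hi ▸ ha (Fin.le_last l))
      by_cases hlast : b (Fin.last k) = i
      · rw [if_pos hlast]; exact Dop_mono_top_eq hle' hlast
      · rw [if_neg hlast]
        refine Dop_mono_all_lt fun l => ?_
        have h1 : b l ≤ b (Fin.last k) := hbmono (Fin.le_last l)
        have h2 := hle' (Fin.last k)
        omega
    rw [Finset.sum_congr rfl hterm, ← Finset.sum_filter, slide_eq_sum]
    refine Finset.sum_nbij' (fun b => b ∘ Fin.castSucc) (fun c => ext1 c i)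
      ?_ ?_ ?_ ?_ ?_
    · -- forward membership
      intro b hb
      obtain ⟨hbCF, hblast⟩ := Finset.mem_filter.1 hb
      obtain ⟨hbmono, hble, hbstrict⟩ := mem_CF.1 hbCF
      refine mem_CF.2 ⟨?_, ?_, ?_⟩
      · exact fun u v huv => hbmono (Fin.castSucc_le_castSucc_iff.2 huv)
      · exact fun j => hble _
      · intro j h hlt
        have := hbstrict j (by omega)
        simp only [Function.comp_apply, Fin.castSucc_mk] at *
        exact this hlt
    · -- backward membership
      intro c hc
      obtain ⟨hcmono, hcle, hcstrict⟩ := mem_CF.1 hc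
      have hcle2 : ∀ l : Fin k, c l ≤ a l.castSucc := fun l => hcle l
      have hcle' : ∀ l : Fin k, c l ≤ i := by
        intro l
        exact le_trans (hcle2 l) (hi ▸ ha (Fin.le_last _))
      refine Finset.mem_filter.2 ⟨mem_CF.2 ⟨?_, ?_, ?_⟩, ?_⟩
      · -- monotone
        intro u v huv
        beta_reduce
        unfold ext1
        have huv' : (u : ℕ) ≤ (v : ℕ) := huv
        split_ifs with h1 h2 h2
        · exact hcmono (show (⟨(u:ℕ), h1⟩ : Fin k) ≤ ⟨(v:ℕ), h2⟩ from huv')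
        · exact hcle' _
        · omega
        · exact le_rfl
      · -- bounded by a
        intro l
        beta_reduce
        unfold ext1
        split_ifs with h1
        · have h2 := hcle2 ⟨(l:ℕ), h1⟩
          have e : (Fin.castSucc ⟨(l:ℕ), h1⟩ : Fin (k+1)) = l := Fin.ext (by simp)
          rwa [e] at h2
        · have e : l = Fin.last k := Fin.ext (by simp [Fin.last]; omega)
          rw [e]
          exact le_of_eq hi
      · -- strictness
        intro j h hlt
        beta_reduce
        have hjk0 : j < k := by omega
        rw [ext1_mk_lt c i hjk0]
        by_cases hjk : j + 1 < k
        · rw [ext1_mk_lt c i hjk]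
          refine hcstrict j hjk ?_
          simp only [Function.comp_apply, Fin.castSucc_mk]
          exact hlt
        · have e : (⟨j+1, h⟩ : Fin (k+1)) = Fin.last k := Fin.ext (by simp [Fin.last]; omega)
          rw [e, ext1_last]
          have h1 := hcle2 ⟨j, hjk0⟩
          have e1 : (Fin.castSucc ⟨j, hjk0⟩ : Fin (k+1)) = ⟨j, by omega⟩ := Fin.ext (by simp)
          rw [e1] at h1
          have h2 : a (⟨j, by omega⟩ : Fin (k+1)) < a (Fin.last k) := by rw [← e]; exact hlt
          omega
      · beta_reduce
        exact ext1_last c i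
    · -- left inverse
      intro b hb
      obtain ⟨_, hblast⟩ := Finset.mem_filter.1 hb
      funext l
      beta_reduce
      unfold ext1
      split_ifs with h1
      · exact congrArg b (Fin.ext (by simp))
      · rw [show b l = b (Fin.last k) from congrArg b (Fin.ext (by simp [Fin.last]; omega))]
        exact hblast.symm
    · -- right inverse
      intro c _
      funext l
      beta_reduce
      rw [Function.comp_apply, ext1_castSucc]
    · intro b _; rfl
  · rw [if_neg hi]
    rcases Nat.lt_or_ge (a (Fin.last k)) i with hgt | hge
    · refine Finset.sum_eq_zero fun b hb => ?_
      obtain ⟨hbmono, hble, _⟩ := mem_CF.1 hb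
      exact Dop_mono_all_lt fun l => lt_of_le_of_lt (le_trans (hble l) (ha (Fin.le_last l))) hgt
    · have hlt : i < a (Fin.last k) := by omega
      refine Finset.sum_involution (fun b _ => gfun i b) ?_ ?_ ?_ ?_
      · -- pair sums vanish
        intro b hb
        obtain hc := mem_CF.1 hb
        by_cases hA : ActiveP i b
        · simp only [gfun]
          rw [if_pos hA]
          by_cases hx : ∃ l, b l = i + 1
          · have hno : ∀ l, b l ≠ i := fun l hl => (hA.2.1 ⟨l, hl⟩) hx
            have h1 : Dop i (mono b) = -mono (fun l => min (b l.castSucc) i) :=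
              Dop_mono_case_i1 hc.1 hA.1 hno hx
            have h2 : Dop i (mono (swfun i ∘ b)) = mono ((swfun i ∘ b) ∘ Fin.castSucc) := by
              refine Dop_mono_case_i (compat_sw ha hc hlt hA).1 ?_ ?_
              · intro l
                have := hA.1 l; have := hno l
                simp only [Function.comp_apply]
                unfold swfun; split_ifs <;> omega
              · obtain ⟨l, hl⟩ := hx
                exact ⟨l, by simp [Function.comp_apply, swfun, hl]⟩
            rw [h1, h2]
            have : ((swfun i ∘ b) ∘ Fin.castSucc) = (fun l => min (b l.castSucc) i) := by
              funext l
              have := hA.1 l.castSucc; have := hno l.castSucc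
              simp only [Function.comp_apply]
              unfold swfun; split_ifs <;> omega
            rw [this]; ring
          · have hexi : ∃ l, b l = i := hA.2.2 hx
            push_neg at hx
            have hle' : ∀ l, b l ≤ i := fun l => by have := hA.1 l; have := hx l; omega
            have h1 : Dop i (mono b) = mono (b ∘ Fin.castSucc) :=
              Dop_mono_case_i hc.1 hle' hexi
            have h2 : Dop i (mono (swfun i ∘ b))
                = -mono (fun l => min ((swfun i ∘ b) l.castSucc) i) := by
              refine Dop_mono_case_i1 (compat_sw ha hc hlt hA).1 ?_ ?_ ?_
              · intro l
                have := hle' l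
                simp only [Function.comp_apply]
                unfold swfun; split_ifs <;> omega
              · intro l
                have h3 := hx l
                simp only [Function.comp_apply]
                unfold swfun; split_ifs <;> omega
              · obtain ⟨l, hl⟩ := hexi
                exact ⟨l, by simp [Function.comp_apply, swfun, hl]⟩
            rw [h1, h2]
            have : (fun l => min ((swfun i ∘ b) l.castSucc) i) = (b ∘ Fin.castSucc) := by
              funext l
              have := hle' l.castSucc
              simp only [Function.comp_apply]
              unfold swfun; split_ifs <;> omega
            rw [this]; ring
        · simp only [gfun]
          rw [if_neg hA, Dop_mono_nonactive hA]
          ring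
      · -- nontrivial on nonzero terms
        intro b hb hnz
        have hA : ActiveP i b := by
          by_contra hA
          exact hnz (Dop_mono_nonactive hA)
        simp only [gfun]
        rw [if_pos hA]
        intro hgb
        by_cases hx : ∃ l, b l = i + 1
        · obtain ⟨l, hl⟩ := hx
          have := congrFun hgb l
          simp only [Function.comp_apply, hl] at this
          unfold swfun at this
          split_ifs at this <;> omega
        · obtain ⟨l, hl⟩ := hA.2.2 hx
          have := congrFun hgb l
          simp only [Function.comp_apply, hl] at this
          unfold swfun at this
          split_ifs at this <;> omega
      · -- stays in the set
        intro b hb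
        by_cases hA : ActiveP i b
        · simp only [gfun]
          rw [if_pos hA]
          exact mem_CF.2 (compat_sw ha (mem_CF.1 hb) hlt hA)
        · simp only [gfun]
          rw [if_neg hA]
          exact hb
      · -- involution
        intro b hb
        by_cases hA : ActiveP i b
        · simp only [gfun]
          simp only [if_pos hA, if_pos (active_sw hA)]
          funext l
          simp only [Function.comp_apply, swfun_invol]
        · simp only [gfun]
          simp only [if_neg hA]

def chainD (l : List ℕ) (f : Pol) : Pol := l.foldr (fun idx g => Dop idx g) f

lemma chainD_zero (l : List ℕ) : chainD l 0 = 0 := by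
  induction l with
  | nil => rfl
  | cons x xs ih =>
    show Dop x (chainD xs 0) = 0
    rw [ih, Dop_zero]

lemma chainD_smul (l : List ℕ) (z : ℤ) (f : Pol) : chainD l (z • f) = z • chainD l f := by
  induction l with
  | nil => rfl
  | cons x xs ih =>
    show Dop x (chainD xs (z • f)) = z • Dop x (chainD xs f)
    rw [ih, Dop_smul]

lemma chainD_sum {α : Type*} (l : List ℕ) (s : Finset α) (f : α → Pol) :
    chainD l (∑ x ∈ s, f x) = ∑ x ∈ s, chainD l (f x) := by
  induction l with
  | nil => rfl
  | cons x xs ih =>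
    show Dop x (chainD xs (∑ y ∈ s, f y)) = _
    rw [ih, Dop_sum]
    rfl

lemma chainD_concat (l : List ℕ) (x : ℕ) (f : Pol) :
    chainD (l ++ [x]) f = chainD l (Dop x f) := by
  rw [chainD, List.foldr_append]
  rfl

lemma slide_zero_eq_one (a : Fin 0 → ℕ) : slide a = 1 := by
  rw [slide_eq_sum]
  have hmem : (fun l : Fin 0 => l.elim0 : Fin 0 → ℕ) ∈ CF a := by
    refine mem_CF.2 ⟨?_, ?_, ?_⟩
    · intro u v _
      exact u.elim0
    · intro j
      exact j.elim0
    · intro j h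
      omega
  have : CF a = {fun l : Fin 0 => l.elim0} := by
    refine Finset.eq_singleton_iff_unique_mem.2 ⟨hmem, fun b _ => ?_⟩
    funext l
    exact l.elim0
  rw [this, Finset.sum_singleton, mono]
  simp

lemma chain_slide {k : ℕ} (i : Fin k → ℕ) {a : Fin k → ℕ} (ha : Monotone a) :
    constantCoeff (chainD (List.ofFn i) (slide a)) = if i = a then 1 else 0 := by
  induction k with
  | zero =>
    have hia : i = a := funext fun l => l.elim0
    rw [if_pos hia, slide_zero_eq_one]
    show constantCoeff 1 = 1
    exact map_one _
  | succ k ih =>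
    have hsplit : List.ofFn i
        = List.ofFn (fun l : Fin k => i l.castSucc) ++ [i (Fin.last k)] := by
      rw [List.ofFn_succ', List.concat_eq_append]
    rw [hsplit, chainD_concat, Dop_slide _ ha]
    by_cases hlast : i (Fin.last k) = a (Fin.last k)
    · rw [if_pos hlast]
      have hamono : Monotone (a ∘ Fin.castSucc) :=
        fun u v huv => ha (Fin.castSucc_le_castSucc_iff.2 huv)
      rw [ih (fun l => i l.castSucc) hamono]
      by_cases h2 : (fun l : Fin k => i l.castSucc) = a ∘ Fin.castSucc
      · rw [if_pos h2, if_pos]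
        funext l
        rcases Fin.eq_castSucc_or_eq_last l with ⟨l', rfl⟩ | rfl
        · exact congrFun h2 l'
        · exact hlast
      · rw [if_neg h2, if_neg]
        intro h
        exact h2 (funext fun l => congrFun h l.castSucc)
    · rw [if_neg hlast, chainD_zero, map_zero, if_neg]
      intro h
      exact hlast (congrFun h (Fin.last k))

lemma swapVar_fixed {j : ℕ} {f : Pol} (h : ∀ d ∈ f.support, ∀ t, j ≤ t → d t = 0) :
    swapVar j f = f := by
  conv_lhs => rw [as_sum f]
  rw [swapVar, map_sum]
  conv_rhs => rw [as_sum f]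
  refine Finset.sum_congr rfl fun d hd => ?_
  rw [rename_monomial]
  have hmd : Finsupp.mapDomain (⇑(Equiv.swap j (j+1))) d = d := by
    rw [← Finsupp.equivMapDomain_eq_mapDomain]
    ext t
    rw [Finsupp.equivMapDomain_apply, Equiv.symm_swap]
    rcases eq_or_ne t j with rfl | h1
    · rw [Equiv.swap_apply_left, h d hd _ le_rfl, h d hd _ (by omega)]
    rcases eq_or_ne t (j+1) with rfl | h2
    · rw [Equiv.swap_apply_right, h d hd _ le_rfl, h d hd _ (by omega)]
    · rw [Equiv.swap_apply_of_ne_of_ne h1 h2]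
  rw [hmd]

lemma Dop_eq_zero_of_big {f : Pol} {j : ℕ}
    (h : ∀ d ∈ f.support, ∀ t, j ≤ t → d t = 0) : Dop j f = 0 := by
  have : ddiff j f = 0 := ddiff_eq (by rw [swapVar_fixed h]; ring)
  rw [Dop, this, map_zero]

lemma exists_bound (f : Pol) : ∃ N, ∀ d ∈ f.support, ∀ t, N ≤ t → d t = 0 := by
  refine ⟨f.support.sup (fun d => d.support.sup id + 1), fun d hd t ht => ?_⟩
  by_contra hne0
  have h1 : t ∈ d.support := Finsupp.mem_support_iff.2 hne0
  have h2 : t ≤ d.support.sup id := Finset.le_sup (f := id) h1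
  have h3 : d.support.sup id + 1 ≤ f.support.sup (fun d => d.support.sup id + 1) :=
    Finset.le_sup (f := fun d => d.support.sup id + 1) hd
  omega

lemma toMultiset_map_X_prod (d : ℕ →₀ ℕ) :
    ((Finsupp.toMultiset d).map X).prod = (monomial d 1 : Pol) := by
  induction d using Finsupp.induction with
  | zero =>
    rw [show Finsupp.toMultiset (0 : ℕ →₀ ℕ) = 0 from map_zero _]
    simp
  | single_add a n f han hn ih =>
    rw [Finsupp.toMultiset_add, Multiset.map_add, Multiset.prod_add, ih,
      Finsupp.toMultiset_single, Multiset.map_nsmul]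
    rw [show Multiset.map X {a} = {X a} from rfl]
    rw [Multiset.nsmul_singleton]
    rw [Multiset.prod_replicate, X_pow_eq_monomial, monomial_mul, one_mul]

lemma compat_self {k : ℕ} {a : Fin k → ℕ} (ha : Monotone a) : Compat a a :=
  ⟨ha, fun _ => le_rfl, fun _ _ hlt => hlt⟩

lemma mono_mem_span {k : ℕ} (b : Fin k → ℕ) (hb : Monotone b) :
    mono b ∈ Submodule.span ℤ (slide '' {a : Fin k → ℕ | Monotone a}) := by
  generalize hn : (∑ j, b j) = n
  induction n using Nat.strong_induction_on generalizing b with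
  | _ n ih =>
    have hbCF : b ∈ CF b := mem_CF.2 (compat_self hb)
    have hslide : slide b = ∑ c ∈ (CF b).erase b, mono c + mono b := by
      rw [slide_eq_sum, Finset.sum_erase_add _ _ hbCF]
    have hmono_eq : mono b = slide b - ∑ c ∈ (CF b).erase b, mono c := by
      rw [hslide]; ring
    rw [hmono_eq]
    refine Submodule.sub_mem _ (Submodule.subset_span ⟨b, hb, rfl⟩)
      (Submodule.sum_mem _ fun c hc => ?_)
    obtain ⟨hcne, hcCF⟩ := Finset.mem_erase.1 hc
    obtain ⟨hcmono, hcle, _⟩ := mem_CF.1 hcCF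
    have hlt : (∑ j, c j) < n := by
      rw [← hn]
      refine Finset.sum_lt_sum (fun j _ => hcle j) ?_
      by_contra hcon
      push_neg at hcon
      exact hcne (funext fun j => le_antisymm (hcle j) (hcon j (Finset.mem_univ j)))
    exact ih _ hlt c hcmono rfl

lemma monomial_eq_mono {k : ℕ} (d : ℕ →₀ ℕ) (hcard : (d.sum fun _ n => n) = k) :
    ∃ b : Fin k → ℕ, Monotone b ∧ (monomial d 1 : Pol) = mono b := by
  classical
  set L := (Finsupp.toMultiset d).sort (· ≤ ·) with hL
  have hlen : L.length = k := by
    rw [hL, Multiset.length_sort, Finsupp.card_toMultiset]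
    exact hcard
  refine ⟨fun l => L.get (Fin.cast hlen.symm l), ?_, ?_⟩
  · have hs : List.Pairwise (· ≤ ·) L := Multiset.pairwise_sort _ _
    intro u v huv
    exact hs.sortedLE.monotone_get (by simpa using huv)
  · rw [← toMultiset_map_X_prod d, mono,
      show Finsupp.toMultiset d = (L : Multiset ℕ) from (Multiset.sort_eq _ _).symm]
    rw [show Multiset.map X (L : Multiset ℕ) = ((L.map X : List Pol) : Multiset Pol) from rfl]
    rw [show ((L.map X : List Pol) : Multiset Pol).prod = (L.map X).prod from Multiset.prod_coe _]
    have h1 : ∏ j : Fin k, X (L.get (Fin.cast hlen.symm j))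
        = ∏ j : Fin L.length, (X (L.get j) : Pol) :=
      Fintype.prod_equiv (finCongr hlen.symm) _ _ fun j => rfl
    rw [h1, ← List.prod_ofFn]
    congr 1
    rw [show (fun j => (X (L.get j) : Pol)) = (X ∘ L.get) from rfl, ← List.map_ofFn,
      List.ofFn_get]

lemma homog_mem_span {k : ℕ} {f : Pol} (hf : f.IsHomogeneous k) :
    f ∈ Submodule.span ℤ (slide '' {a : Fin k → ℕ | Monotone a}) := by
  rw [as_sum f]
  refine Submodule.sum_mem _ fun d hd => ?_
  have hdeg : (d.sum fun _ n => n) = k := by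
    have h1 := hf (MvPolynomial.mem_support_iff.1 hd)
    rw [show (1 : ℕ → ℕ) = fun _ => 1 from rfl, ← Finsupp.degree_eq_weight_one] at h1
    exact h1
  obtain ⟨b, hbmono, hbeq⟩ := monomial_eq_mono d hdeg
  have : (monomial d (coeff d f) : Pol) = (coeff d f) • mono b := by
    rw [← hbeq, smul_monomial, smul_eq_mul, mul_one]
  rw [this]
  exact Submodule.smul_mem _ _ (mono_mem_span b hbmono)

end

/-- slide expansion of a homogeneous polynomial of degree `k`, with
coefficients extracted by the slide extractors; finitely many coefficients are nonzero. -/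
theorem stmt_12 {k : ℕ} (f : Pol) (hf : f.IsHomogeneous k) :
    {i : Fin k → ℕ | Monotone i ∧
        constantCoeff ((List.ofFn i).foldr (fun idx g => Dop idx g) f) ≠ 0}.Finite ∧
    f = ∑ᶠ i ∈ {i : Fin k → ℕ | Monotone i},
        C (constantCoeff ((List.ofFn i).foldr (fun idx g => Dop idx g) f)) * slide i := by
  classical
  have hspan := homog_mem_span hf
  rw [Finsupp.mem_span_image_iff_linearCombination] at hspan
  obtain ⟨c, hcsupp, hcsum⟩ := hspan
  rw [Finsupp.mem_supported] at hcsupp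
  have hmono : ∀ a ∈ c.support, Monotone a := fun a ha => hcsupp ha
  have hphi : ∀ i : Fin k → ℕ,
      constantCoeff ((List.ofFn i).foldr (fun idx g => Dop idx g) f) = c i := by
    intro i
    show constantCoeff (chainD (List.ofFn i) f) = c i
    rw [← hcsum, Finsupp.linearCombination_apply, Finsupp.sum, chainD_sum, map_sum]
    have hterm : ∀ a ∈ c.support,
        constantCoeff (chainD (List.ofFn i) (c a • slide a)) = if i = a then c a else 0 := by
      intro a ha
      rw [chainD_smul, smul_eq_C_mul, map_mul, constantCoeff_C, chain_slide i (hmono a ha)]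
      split_ifs
      · rw [mul_one]
      · rw [mul_zero]
    rw [Finset.sum_congr rfl hterm, Finset.sum_ite_eq c.support i (fun a => c a)]
    split_ifs with h
    · rfl
    · exact (Finsupp.notMem_support_iff.1 h).symm
  constructor
  · refine Set.Finite.subset c.support.finite_toSet fun i hi => ?_
    rw [Finset.mem_coe, Finsupp.mem_support_iff]
    exact fun h0 => hi.2 ((hphi i).trans h0)
  · have hFeq : ∀ i : Fin k → ℕ,
        C (constantCoeff ((List.ofFn i).foldr (fun idx g => Dop idx g) f)) * slide i
          = c i • slide i := by
      intro i
      rw [hphi i, smul_eq_C_mul]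
    have h2 : ∑ᶠ i ∈ {i : Fin k → ℕ | Monotone i}, c i • slide i
        = ∑ i ∈ c.support, c i • slide i := by
      refine finsum_mem_eq_sum_of_inter_support_eq _ ?_
      ext i
      simp only [Set.mem_inter_iff, Set.mem_setOf_eq, Function.mem_support, Finset.mem_coe,
        Finsupp.mem_support_iff]
      constructor
      · rintro ⟨hm, hnz⟩
        exact ⟨fun h0 => hnz (by rw [h0, zero_smul]), hnz⟩
      · rintro ⟨hc0, hnz⟩
        exact ⟨hmono i (Finsupp.mem_support_iff.2 hc0), hnz⟩
    have key : ∑ᶠ i ∈ {i : Fin k → ℕ | Monotone i},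
        C (constantCoeff ((List.ofFn i).foldr (fun idx g => Dop idx g) f)) * slide i
          = ∑ i ∈ c.support, c i • slide i :=
      (finsum_mem_congr rfl fun i _ => hFeq i).trans h2
    rw [key, ← hcsum, Finsupp.linearCombination_apply]
    rfl
end

section
/- For every j ≥ 1 and every weakly increasing sequence a of positive integers, the polynomial R_j(𝔉_a) is either 0 or is equal to 𝔉_b for some weakly increasing sequence b of positive integers. -/
/-
Conventions: `Pol = MvPolynomial ℕ ℤ` with the Lean variable `X i` representing
the paper's variable `x_{i+1}` (0-indexed).  All operators carrying a paper index
`i ≥ 1` are represented by Lean operators indexed by `i : ℕ` (Lean `i` ↔ paper `i+1`),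
and sequences of positive integers are represented by sequences of natural numbers
(entry `v` ↔ paper entry `v+1`).
-/

open MvPolynomial
open scoped Classical

namespace Aux15

def phi (j n : ℕ) : ℕ := if n < j then n else n - 1
def psi (j n : ℕ) : ℕ := if n < j then n else n + 1

lemma phi_mono {j m n : ℕ} (h : m ≤ n) : phi j m ≤ phi j n := by
  unfold phi; split_ifs <;> omega

lemma psi_ne (j n : ℕ) : psi j n ≠ j := by unfold psi; split <;> omega

lemma psi_lt {j m n : ℕ} (h : m < n) : psi j m < psi j n := by
  unfold psi; split_ifs <;> omega

lemma psi_le {j m n : ℕ} (h : m ≤ n) : psi j m ≤ psi j n := by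
  unfold psi; split_ifs <;> omega

lemma phi_psi (j n : ℕ) : phi j (psi j n) = n := by
  unfold phi psi; split_ifs <;> omega

lemma phi_inj {j m n : ℕ} (hm : m ≠ j) (hn : n ≠ j) (h : phi j m = phi j n) : m = n := by
  unfold phi at h; split_ifs at h <;> omega

lemma phi_lt {j m n : ℕ} (hm : m ≠ j) (hn : n ≠ j) (h : m < n) : phi j m < phi j n := by
  unfold phi; split_ifs <;> omega

lemma psi_le_of {j x y : ℕ} (h : x ≤ phi j y) (h0 : j = 0 → 1 ≤ y) : psi j x ≤ y := by
  unfold phi at h; unfold psi; split_ifs at * <;> omega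

lemma phi_strict_of {j m n : ℕ} (hmn : m ≤ n) (h : phi j m < phi j n) : m < n := by
  unfold phi at h; split_ifs at h <;> omega

end Aux15

open Aux15 in
/-- applying a Bergeron–Sottile operator to a slide polynomial gives
`0` or another slide polynomial. -/
theorem stmt_15 (j : ℕ) {k : ℕ} (a : Fin k → ℕ) (ha : Monotone a) :
    BS j (slide a) = 0 ∨
    ∃ (k' : ℕ) (b : Fin k' → ℕ), Monotone b ∧ BS j (slide a) = slide b := by
  classical
  -- the compatible set is finite
  have hSfin : {b : Fin k → ℕ | Compat a b}.Finite := by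
    apply Set.Finite.subset (Set.Finite.pi (t := fun t => Set.Iic (a t))
      (fun t => Set.finite_Iic (a t)))
    intro b hb
    simp only [Set.mem_pi, Set.mem_univ, Set.mem_Iic, forall_true_left]
    exact fun t => hb.2.1 t
  have h1 : slide a = ∑ b ∈ hSfin.toFinset, ∏ t, X (b t) :=
    finsum_mem_eq_finite_toFinset_sum _ hSfin
  have hBSX : ∀ n, BS j (X n : Pol) = if n = j then 0 else X (phi j n) := by
    intro n
    simp only [BS, aeval_X, phi]
    split_ifs <;> first | rfl | omega
  rw [h1, map_sum]
  have h2 : ∀ b ∈ hSfin.toFinset,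
      BS j (∏ t, X (b t) : Pol) = if ∀ t, b t ≠ j then ∏ t, X (phi j (b t)) else 0 := by
    intro b _
    rw [map_prod]
    by_cases hb : ∀ t, b t ≠ j
    · rw [if_pos hb]
      exact Finset.prod_congr rfl fun t _ => by rw [hBSX, if_neg (hb t)]
    · rw [if_neg hb]
      push_neg at hb
      obtain ⟨t, ht⟩ := hb
      exact Finset.prod_eq_zero (Finset.mem_univ t) (by rw [hBSX, if_pos ht])
  rw [Finset.sum_congr rfl h2, ← Finset.sum_filter]
  set S' := hSfin.toFinset.filter (fun b => ∀ t, b t ≠ j) with hS'def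
  rcases S'.eq_empty_or_nonempty with hemp | ⟨b₀, hb₀⟩
  · left; rw [hemp]; simp
  · right
    have hb₀' := Finset.mem_filter.mp hb₀
    have hb₀S : Compat a b₀ := hSfin.mem_toFinset.mp hb₀'.1
    have hb₀ne : ∀ t, b₀ t ≠ j := hb₀'.2
    have hA0 : ∀ t : Fin k, j = 0 → 1 ≤ a t := by
      intro t hj
      have h1 := hb₀S.2.1 t
      have h2 := hb₀ne t
      omega
    set Φ : (Fin k → ℕ) → (Fin k → ℕ) := fun b t => phi j (b t) with hΦ
    have hinj : ∀ x ∈ S', ∀ y ∈ S', Φ x = Φ y → x = y := by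
      intro x hx y hy hxy
      funext t
      exact phi_inj ((Finset.mem_filter.mp hx).2 t) ((Finset.mem_filter.mp hy).2 t)
        (congrFun hxy t)
    set Cim := S'.image Φ with hCimdef
    -- membership characterization of Cim
    have memC : ∀ c, c ∈ Cim ↔ (Monotone c ∧ (∀ t, c t ≤ phi j (a t)) ∧
        ∀ (t : ℕ) (h : t + 1 < k), a ⟨t, Nat.lt_of_succ_lt h⟩ < a ⟨t+1, h⟩ →
          c ⟨t, Nat.lt_of_succ_lt h⟩ < c ⟨t+1, h⟩) := by
      intro c
      constructor
      · intro hc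
        obtain ⟨b, hb, rfl⟩ := Finset.mem_image.mp hc
        have hbS : Compat a b := hSfin.mem_toFinset.mp (Finset.mem_filter.mp hb).1
        have hbne : ∀ t, b t ≠ j := (Finset.mem_filter.mp hb).2
        refine ⟨fun s t hst => phi_mono (hbS.1 hst), fun t => phi_mono (hbS.2.1 t),
          fun t h hasc => phi_lt (hbne _) (hbne _) (hbS.2.2 t h hasc)⟩
      · rintro ⟨hmono, hle, hstr⟩
        refine Finset.mem_image.mpr ⟨fun t => psi j (c t), ?_, funext fun t => phi_psi j (c t)⟩
        refine Finset.mem_filter.mpr ⟨hSfin.mem_toFinset.mpr ?_, fun t => psi_ne j (c t)⟩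
        exact ⟨fun s t hst => psi_le (hmono hst),
          fun t => psi_le_of (hle t) (hA0 t),
          fun t h hasc => psi_lt (hstr t h hasc)⟩
    have hCne : Cim.Nonempty := ⟨Φ b₀, Finset.mem_image_of_mem _ hb₀⟩
    set e : Fin k → ℕ := fun t => Cim.sup' hCne (fun c => c t) with hedef
    have heprops : Monotone e ∧ (∀ t, e t ≤ phi j (a t)) ∧
        ∀ (t : ℕ) (h : t + 1 < k), a ⟨t, Nat.lt_of_succ_lt h⟩ < a ⟨t+1, h⟩ →
          e ⟨t, Nat.lt_of_succ_lt h⟩ < e ⟨t+1, h⟩ := by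
      refine ⟨?_, ?_, ?_⟩
      · intro s t hst
        apply Finset.sup'_le
        intro c hc
        exact le_trans (((memC c).mp hc).1 hst) (Finset.le_sup' (fun c => c t) hc)
      · intro t
        apply Finset.sup'_le
        intro c hc
        exact ((memC c).mp hc).2.1 t
      · intro t h hasc
        obtain ⟨c₀, hc₀, hey⟩ := Finset.exists_mem_eq_sup' hCne
          (fun c => c ⟨t, Nat.lt_of_succ_lt h⟩)
        calc e ⟨t, Nat.lt_of_succ_lt h⟩ = c₀ ⟨t, Nat.lt_of_succ_lt h⟩ := hey
          _ < c₀ ⟨t+1, h⟩ := ((memC c₀).mp hc₀).2.2 t h hasc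
          _ ≤ e ⟨t+1, h⟩ := Finset.le_sup' (fun c => c ⟨t+1, h⟩) hc₀
    have he : e ∈ Cim := (memC e).mpr heprops
    -- ascents of e are ascents of a
    have ascLem : ∀ (t : ℕ) (h : t + 1 < k),
        e ⟨t, Nat.lt_of_succ_lt h⟩ < e ⟨t+1, h⟩ → a ⟨t, Nat.lt_of_succ_lt h⟩ < a ⟨t+1, h⟩ := by
      intro t h helt
      set T : Fin k := ⟨t, Nat.lt_of_succ_lt h⟩ with hT
      set T1 : Fin k := ⟨t+1, h⟩ with hT1
      by_contra hno
      push_neg at hno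
      have haeq : a T = a T1 := le_antisymm (ha (by simp [hT, hT1, Fin.mk_le_mk])) hno
      have heT : e T ≤ phi j (a T) := heprops.2.1 T
      rcases eq_or_lt_of_le heT with heq | hlt
      · have h1 : e T1 ≤ phi j (a T1) := heprops.2.1 T1
        rw [← haeq] at h1
        omega
      · -- build a bigger element at position T, contradiction with sup'
        set c' : Fin k → ℕ := fun s => if s = T then min (phi j (a T)) (e T1) else e s with hc'def
        have heTT1 : e T ≤ e T1 := le_of_lt helt
        have hc'mem : c' ∈ Cim := by
          rw [memC]
          refine ⟨?_, ?_, ?_⟩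
          · intro s u hsu
            by_cases hs : s = T <;> by_cases hu : u = T
            · simp [hc'def, hs, hu]
            · have hTu : T1 ≤ u := by
                have : T < u := lt_of_le_of_ne (hs ▸ hsu) (fun hh => hu (hs ▸ hh.symm))
                simp only [hT, hT1, Fin.le_def, Fin.lt_def] at this ⊢
                omega
              simp only [hc'def, hs, if_pos rfl, if_neg hu]
              exact le_trans (min_le_right _ _) (heprops.1 hTu)
            · have hsT : s ≤ T := hu ▸ hsu
              simp only [hc'def, if_neg hs, hu, if_pos rfl]
              exact le_trans (heprops.1 hsT) (le_min (le_of_lt hlt) heTT1)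
            · simp only [hc'def, if_neg hs, if_neg hu]
              exact heprops.1 hsu
          · intro s
            by_cases hs : s = T
            · simp only [hc'def, hs, if_pos rfl]
              exact le_trans (min_le_left _ _) (le_of_eq rfl)
            · simp only [hc'def, if_neg hs]
              exact heprops.2.1 s
          · intro s hs hasc
            have hsT : (⟨s, Nat.lt_of_succ_lt hs⟩ : Fin k) = T ↔ s = t := by
              simp [hT, Fin.mk.injEq]
            have hs1T : (⟨s+1, hs⟩ : Fin k) = T ↔ s + 1 = t := by
              simp [hT, Fin.mk.injEq]
            by_cases h1 : s = t
            · exfalso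
              have : (⟨s, Nat.lt_of_succ_lt hs⟩ : Fin k) = T := hsT.mpr h1
              have h2 : (⟨s+1, hs⟩ : Fin k) = T1 := by simp [hT1, Fin.mk.injEq, h1]
              rw [this, h2] at hasc
              omega
            · by_cases h2 : s + 1 = t
              · have hne1 : ¬ ((⟨s, Nat.lt_of_succ_lt hs⟩ : Fin k) = T) := by
                  rw [hsT]; omega
                have heq2 : (⟨s+1, hs⟩ : Fin k) = T := hs1T.mpr h2
                simp only [hc'def, if_neg hne1, heq2, if_pos rfl]
                have hee : e ⟨s, Nat.lt_of_succ_lt hs⟩ < e ⟨s+1, hs⟩ :=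
                  heprops.2.2 s hs hasc
                rw [heq2] at hee
                exact lt_of_lt_of_le hee (le_min (le_of_lt hlt) heTT1)
              · have hne1 : ¬ ((⟨s, Nat.lt_of_succ_lt hs⟩ : Fin k) = T) := by
                  rw [hsT]; exact h1
                have hne2 : ¬ ((⟨s+1, hs⟩ : Fin k) = T) := by
                  rw [hs1T]; exact h2
                simp only [hc'def, if_neg hne1, if_neg hne2]
                exact heprops.2.2 s hs hasc
        have hle : c' T ≤ e T := Finset.le_sup' (fun c => c T) hc'mem
        have : c' T = min (phi j (a T)) (e T1) := by simp [hc'def]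
        omega
    -- Cim is the compatible set of e
    have hCompatE : ∀ c, c ∈ Cim ↔ Compat e c := by
      intro c
      constructor
      · intro hc
        obtain ⟨hm, hle, hstr⟩ := (memC c).mp hc
        refine ⟨hm, fun t => Finset.le_sup' (fun c => c t) hc, ?_⟩
        intro t h hasc
        exact hstr t h (ascLem t h hasc)
      · rintro ⟨hm, hle, hstr⟩
        rw [memC]
        refine ⟨hm, fun t => le_trans (hle t) (heprops.2.1 t), ?_⟩
        intro t h hasc
        exact hstr t h (heprops.2.2 t h hasc)
    refine ⟨k, e, heprops.1 , ?_⟩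
    have hset : {c : Fin k → ℕ | Compat e c} = ↑Cim := by
      ext c
      simp only [Set.mem_setOf_eq, Finset.coe_sort_coe, Finset.mem_coe]
      exact (hCompatE c).symm
    rw [slide, hset, finsum_mem_coe_finset, Finset.sum_image hinj]
end

section
/- For every nonempty weakly increasing sequence a = (a₁ ≤ ⋯ ≤ a_k) of positive integers, the monomial satisfies x_{a₁}⋯x_{a_k} = Σ_{b ∈ E(a)} ε(b)·𝔉_b, where the weakly increasing sequences b ∈ E(a) are pairwise distinct; in particular the slide expansion of any monomial is signed multiplicity-free, i.e. all its coefficients lie in {−1,0,1}. -/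
/-
Conventions: `Pol = MvPolynomial ℕ ℤ` with the Lean variable `X i` representing
the paper's variable `x_{i+1}` (0-indexed).  All operators carrying a paper index
`i ≥ 1` are represented by Lean operators indexed by `i : ℕ` (Lean `i` ↔ paper `i+1`),
and sequences of positive integers are represented by sequences of natural numbers
(entry `v` ↔ paper entry `v+1`).
-/

open MvPolynomial
open scoped Classical

/-- Membership in the set `E(a)` of the paper (for `a` weakly increasing), described
position by position: within a block of equal values of `a`, consecutive entries of
`b` increase by `0` or `1`; at the last position of each block (including the final
position), the entry of `b` is the value of `a` there or one less; and at the start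
of each new block the entry of `b` strictly exceeds the previous value of `a`. -/
def memE {k : ℕ} (a b : Fin k → ℕ) : Prop :=
  (∀ (j : ℕ) (h : j + 1 < k),
      (a ⟨j, Nat.lt_of_succ_lt h⟩ = a ⟨j+1, h⟩ →
        (b ⟨j+1, h⟩ = b ⟨j, Nat.lt_of_succ_lt h⟩ ∨
         b ⟨j+1, h⟩ = b ⟨j, Nat.lt_of_succ_lt h⟩ + 1)) ∧
      (a ⟨j, Nat.lt_of_succ_lt h⟩ < a ⟨j+1, h⟩ →
        ((b ⟨j, Nat.lt_of_succ_lt h⟩ = a ⟨j, Nat.lt_of_succ_lt h⟩ ∨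
          b ⟨j, Nat.lt_of_succ_lt h⟩ + 1 = a ⟨j, Nat.lt_of_succ_lt h⟩) ∧
         a ⟨j, Nat.lt_of_succ_lt h⟩ < b ⟨j+1, h⟩))) ∧
  ∀ h : 0 < k,
    b ⟨k-1, Nat.sub_lt h Nat.one_pos⟩ = a ⟨k-1, Nat.sub_lt h Nat.one_pos⟩ ∨
    b ⟨k-1, Nat.sub_lt h Nat.one_pos⟩ + 1 = a ⟨k-1, Nat.sub_lt h Nat.one_pos⟩

/-- The exponent of the sign `ε(b)`: the total of the rises; at a position `j` that is
not the last of its block the rise is `b_{j+1} − b_j`, and at the last position of a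
block (value `M_i = a_j`) the rise is `a_j − b_j`; the total over a block starting at
`b₁` telescopes to `n(e) = M_i − b₁`. -/
def epsExp {k : ℕ} (a b : Fin k → ℕ) : ℕ :=
  ∑ j : Fin k,
    if h : (j : ℕ) + 1 < k then
      (if a j = a ⟨(j : ℕ) + 1, h⟩ then b ⟨(j : ℕ) + 1, h⟩ - b j else a j - b j)
    else a j - b j

/-- The sign `ε(b) = (−1)^{n(e¹)+⋯+n(e^p)}`. -/
def eps {k : ℕ} (a b : Fin k → ℕ) : ℤ := (-1) ^ epsExp a b


/-! ### Auxiliary development for stmt_17 -/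


open Finset

noncomputable section

def Fval : (k : ℕ) → (Fin k → ℕ) → (Fin k → ℕ) → ℕ → ℕ → ℕ → ℤ
  | 0, _, _, _, _, _ => 1
  | (k+1), a, c, A', B, C =>
    if a (Fin.last k) = A' then
      (if c (Fin.last k) ≤ B ∧ c (Fin.last k) ≤ C then
          Fval k (Fin.init a) (Fin.init c) (a (Fin.last k)) B (c (Fin.last k)) else 0)
      - (if c (Fin.last k) + 1 ≤ B ∧ c (Fin.last k) < C then
          Fval k (Fin.init a) (Fin.init c) (a (Fin.last k)) (B-1) (c (Fin.last k)) else 0)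
    else if a (Fin.last k) < A' then
      (if a (Fin.last k) < B ∧ c (Fin.last k) < C then
        (if c (Fin.last k) ≤ a (Fin.last k) then
          Fval k (Fin.init a) (Fin.init c) (a (Fin.last k)) (a (Fin.last k)) (c (Fin.last k)) else 0)
        - (if c (Fin.last k) + 1 ≤ a (Fin.last k) then
          Fval k (Fin.init a) (Fin.init c) (a (Fin.last k)) (a (Fin.last k) - 1) (c (Fin.last k)) else 0)
      else 0)
    else 0

theorem Fval_stab : ∀ (k : ℕ) (a c : Fin k → ℕ) (A' B B' C : ℕ), C ≤ B → C ≤ B' →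
    Fval k a c A' B C = Fval k a c A' B' C := by
  intro k
  induction k with
  | zero => intro a c A' B B' C _ _; rfl
  | succ k ih =>
    intro a c A' B B' C hB hB'
    rw [Fval, Fval]
    split_ifs with h1 h2 h3 h4 h5 h6 h7 h8 h9 h10 h11 h12 h13 h14 h15 h16 h17 h18 h19 h20 h21 h22 h23 h24 h25 h26 <;>
      try (first
        | rfl
        | (exfalso; omega)
        | (rw [ih (Fin.init a) (Fin.init c) (a (Fin.last k)) B B' (c (Fin.last k)) (by omega) (by omega),
              ih (Fin.init a) (Fin.init c) (a (Fin.last k)) (B-1) (B'-1) (c (Fin.last k)) (by omega) (by omega)])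
        | (rw [ih (Fin.init a) (Fin.init c) (a (Fin.last k)) B B' (c (Fin.last k)) (by omega) (by omega)])
        | (rw [ih (Fin.init a) (Fin.init c) (a (Fin.last k)) (a (Fin.last k)) (a (Fin.last k) - 1) (c (Fin.last k)) (by omega) (by omega)]; ring)
        | (rw [ih (Fin.init a) (Fin.init c) (a (Fin.last k)) (a (Fin.last k)) (a (Fin.last k) - 1) (c (Fin.last k)) (by omega) (by omega)]; ring_nf)
        )
  
end
noncomputable section
lemma eq_iff_init_last {k : ℕ} (c a : Fin (k+1) → ℕ) :
    c = a ↔ (Fin.init c = Fin.init a ∧ c (Fin.last k) = a (Fin.last k)) := by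
  constructor
  · rintro rfl; exact ⟨rfl, rfl⟩
  · rintro ⟨h1, h2⟩
    funext j
    induction j using Fin.lastCases with
    | last => exact h2
    | cast i => exact congrFun h1 i

theorem Fval_root : ∀ (k : ℕ) (a c : Fin k → ℕ) (A₀ : ℕ), Monotone a → (∀ j, a j ≤ A₀) →
    Fval k a c A₀ A₀ A₀ = if c = a then 1 else 0 := by
  intro k
  induction k with
  | zero =>
    intro a c A₀ _ _
    rw [if_pos (by funext j; exact absurd j.2 (by omega))]; rfl
  | succ k ih =>
    intro a c A₀ ha hbd
    have hinit : Monotone (Fin.init a) := fun i j hij => ha (by simpa using hij)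
    have hbd' : ∀ j, Fin.init a j ≤ a (Fin.last k) := fun j => ha (Fin.le_last _)
    rw [Fval]
    simp only [eq_iff_init_last c a]
    rcases eq_or_ne (a (Fin.last k)) A₀ with h1 | h1
    · rw [if_pos h1]
      rcases lt_trichotomy (c (Fin.last k)) A₀ with hc | hc | hc
      · rw [if_pos ⟨hc.le, hc.le⟩, if_pos ⟨by omega, hc⟩,
          Fval_stab k _ _ _ A₀ (A₀ - 1) (c (Fin.last k)) (by omega) (by omega),
          if_neg (by rintro ⟨-, h⟩; omega)]
        ring
      · rw [if_pos ⟨hc.le, hc.le⟩, if_neg (by omega), sub_zero, hc, h1,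
          ih _ _ _ hinit (fun j => h1 ▸ hbd' j)]
        simp
      · rw [if_neg (by omega), if_neg (by omega), if_neg (by rintro ⟨-, h⟩; omega)]
        ring
    · have h2 : a (Fin.last k) < A₀ := lt_of_le_of_ne (hbd _) h1
      rw [if_neg h1, if_pos h2]
      rcases lt_trichotomy (c (Fin.last k)) (a (Fin.last k)) with hc | hc | hc
      · rw [if_pos (show a (Fin.last k) < A₀ ∧ c (Fin.last k) < A₀ from ⟨h2, by omega⟩),
          if_pos hc.le, if_pos (by omega),
          Fval_stab k _ _ _ (a (Fin.last k)) (a (Fin.last k) - 1) (c (Fin.last k)) (by omega) (by omega),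
          if_neg (by rintro ⟨-, h⟩; omega)]
        ring
      · rw [if_pos (show a (Fin.last k) < A₀ ∧ c (Fin.last k) < A₀ from ⟨h2, by omega⟩),
          if_pos hc.le, if_neg (by omega), sub_zero, hc, ih _ _ _ hinit hbd']
        simp
      · rw [if_neg (show ¬(c (Fin.last k) ≤ a (Fin.last k)) by omega),
          if_neg (show ¬(c (Fin.last k) + 1 ≤ a (Fin.last k)) by omega),
          if_neg (show ¬(Fin.init c = Fin.init a ∧ c (Fin.last k) = a (Fin.last k)) by
            rintro ⟨-, h⟩; omega)]
        split_ifs <;> simp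
open scoped Classical

/-- link conditions between a new column `(A, x, c1)` and the column `(A', B, C)` to its right. -/
def LinkCond (A x c1 A' B C : ℕ) : Prop :=
  c1 ≤ x ∧ c1 ≤ C ∧
  ((A = A' ∧ (B = x ∨ B = x + 1) ∧ (x < B → c1 < C)) ∨
   (A < A' ∧ (x = A ∨ x + 1 = A) ∧ A < B ∧ c1 < C))

def riseL (A x A' B : ℕ) : ℕ := if A = A' then B - x else A - x

def CondE : (k : ℕ) → (a b c : Fin k → ℕ) → ℕ → ℕ → ℕ → Prop
  | 0, _, _, _, _, _, _ => True
  | (k+1), a, b, c, A', B, C =>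
    LinkCond (a (Fin.last k)) (b (Fin.last k)) (c (Fin.last k)) A' B C ∧
    CondE k (Fin.init a) (Fin.init b) (Fin.init c) (a (Fin.last k)) (b (Fin.last k)) (c (Fin.last k))

def riseE : (k : ℕ) → (a b : Fin k → ℕ) → ℕ → ℕ → ℕ
  | 0, _, _, _, _ => 0
  | (k+1), a, b, A', B =>
    riseL (a (Fin.last k)) (b (Fin.last k)) A' B +
    riseE k (Fin.init a) (Fin.init b) (a (Fin.last k)) (b (Fin.last k))

noncomputable def S (k : ℕ) (a c : Fin k → ℕ) (A' B C n : ℕ) : ℤ :=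
  ∑ b ∈ Fintype.piFinset (fun _ : Fin k => Finset.range n),
    if CondE k a b c A' B C then (-1 : ℤ) ^ (riseE k a b A' B) else 0

lemma sum_piFinset_snoc (k n : ℕ) (f : (Fin (k+1) → ℕ) → ℤ) :
    ∑ b ∈ Fintype.piFinset (fun _ : Fin (k+1) => Finset.range n), f b
    = ∑ x ∈ Finset.range n, ∑ b' ∈ Fintype.piFinset (fun _ : Fin k => Finset.range n),
        f (Fin.snoc b' x) := by
  rw [← Finset.sum_product']
  apply Finset.sum_nbij' (fun b => (b (Fin.last k), Fin.init b)) (fun p => Fin.snoc p.2 p.1)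
  · intro b hb
    simp only [Fintype.mem_piFinset, Finset.mem_range] at hb
    simp only [Finset.mem_product, Finset.mem_range, Fintype.mem_piFinset]
    exact ⟨hb _, fun j => hb _⟩
  · intro p hp
    simp only [Finset.mem_product, Finset.mem_range, Fintype.mem_piFinset] at hp
    simp only [Fintype.mem_piFinset, Finset.mem_range]
    intro j
    induction j using Fin.lastCases with
    | last => simpa using hp.1
    | cast i => simpa using hp.2 i
  · intro b _; exact Fin.snoc_init_self b
  · intro p _
    refine Prod.ext ?_ ?_ <;> simp
  · intro b _; rw [Fin.snoc_init_self]

lemma sum_two_point (n B : ℕ) (hB : B < n) (u v : ℤ) (P Q : Prop)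
    [Decidable P] [Decidable Q] (hQ : Q → 1 ≤ B) (f : ℕ → ℤ)
    (hf : ∀ x, x < n → f x = (if x = B ∧ P then u else 0) + (if x + 1 = B ∧ Q then v else 0)) :
    ∑ x ∈ Finset.range n, f x = (if P then u else 0) + (if Q then v else 0) := by
  rw [Finset.sum_congr rfl (fun x hx => hf x (Finset.mem_range.mp hx)), Finset.sum_add_distrib]
  congr 1
  · by_cases hP : P
    · simp only [hP, and_true, if_true]
      rw [Finset.sum_ite_eq' (Finset.range n) B (fun _ => u), if_pos (Finset.mem_range.mpr hB)]
    · simp [hP]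
  · by_cases hQ' : Q
    · simp only [hQ', and_true, if_true]
      have h1 : 1 ≤ B := hQ hQ'
      have : ∀ x, (x + 1 = B) = (x = B - 1) := fun x => propext (by omega)
      simp_rw [this]
      rw [Finset.sum_ite_eq' (Finset.range n) (B-1) (fun _ => v), if_pos (Finset.mem_range.mpr (by omega))]
    · simp [hQ']

lemma link_eval_sameblock (A B C c1 x : ℕ) (t : ℕ → ℤ) :
    (if LinkCond A x c1 A B C then (-1:ℤ)^(riseL A x A B) * t x else 0)
    = (if x = B ∧ (c1 ≤ B ∧ c1 ≤ C) then t B else 0)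
      + (if x + 1 = B ∧ (c1 + 1 ≤ B ∧ c1 < C) then -(t (B-1)) else 0) := by
  rcases eq_or_ne x B with rfl | hxB
  · rw [if_neg (show ¬(x + 1 = x ∧ (c1 + 1 ≤ x ∧ c1 < C)) by omega), add_zero]
    by_cases hP : c1 ≤ x ∧ c1 ≤ C
    · rw [if_pos (show x = x ∧ (c1 ≤ x ∧ c1 ≤ C) from ⟨rfl, hP⟩),
        if_pos (show LinkCond A x c1 A x C from ⟨hP.1, hP.2, Or.inl ⟨rfl, Or.inl rfl, by omega⟩⟩),
        riseL, if_pos rfl, Nat.sub_self, pow_zero, one_mul]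
    · rw [if_neg (show ¬(LinkCond A x c1 A x C) from fun h => hP ⟨h.1, h.2.1⟩),
        if_neg (show ¬(x = x ∧ (c1 ≤ x ∧ c1 ≤ C)) from fun h => hP h.2)]
  · rcases eq_or_ne (x+1) B with hx1 | hx1
    · rw [if_neg (show ¬(x = B ∧ (c1 ≤ B ∧ c1 ≤ C)) by omega), zero_add]
      by_cases hQ : c1 ≤ x ∧ c1 < C
      · rw [if_pos (show x + 1 = B ∧ (c1 + 1 ≤ B ∧ c1 < C) from ⟨hx1, by omega, hQ.2⟩),
          if_pos (show LinkCond A x c1 A B C from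
            ⟨hQ.1, hQ.2.le, Or.inl ⟨rfl, Or.inr hx1.symm, fun _ => hQ.2⟩⟩),
          riseL, if_pos rfl, show B - x = 1 by omega, pow_one, show B - 1 = x by omega]
        ring
      · rw [if_neg (show ¬(LinkCond A x c1 A B C) by
            rintro ⟨l1, l2, (⟨-, -, himp⟩ | ⟨hlt, -⟩)⟩
            · exact hQ ⟨l1, himp (by omega)⟩
            · omega),
          if_neg (show ¬(x + 1 = B ∧ (c1 + 1 ≤ B ∧ c1 < C)) by
            rintro ⟨-, h2, h3⟩; exact hQ ⟨by omega, h3⟩)]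
    · rw [if_neg (show ¬(LinkCond A x c1 A B C) by
          rintro ⟨-, -, (⟨-, (h|h), -⟩ | ⟨hlt, -⟩)⟩ <;> omega),
        if_neg (show ¬(x = B ∧ (c1 ≤ B ∧ c1 ≤ C)) by omega),
        if_neg (show ¬(x + 1 = B ∧ (c1 + 1 ≤ B ∧ c1 < C)) by omega)]
      simp

lemma link_eval_boundary (A A' B C c1 x : ℕ) (h1 : A < A') (hgB : A < B) (hgC : c1 < C)
    (t : ℕ → ℤ) :
    (if LinkCond A x c1 A' B C then (-1:ℤ)^(riseL A x A' B) * t x else 0)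
    = (if x = A ∧ c1 ≤ A then t A else 0) + (if x + 1 = A ∧ c1 + 1 ≤ A then -(t (A-1)) else 0) := by
  rcases eq_or_ne x A with rfl | hxA
  · rw [if_neg (show ¬(x + 1 = x ∧ c1 + 1 ≤ x) by omega), add_zero]
    by_cases hP : c1 ≤ x
    · rw [if_pos (show x = x ∧ c1 ≤ x from ⟨rfl, hP⟩),
        if_pos (show LinkCond x x c1 A' B C from
          ⟨hP, by omega, Or.inr ⟨h1, Or.inl rfl, hgB, hgC⟩⟩),
        riseL, if_neg (show ¬(x = A') by omega), Nat.sub_self, pow_zero, one_mul]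
    · rw [if_neg (show ¬(LinkCond x x c1 A' B C) from fun h => hP h.1),
        if_neg (show ¬(x = x ∧ c1 ≤ x) from fun h => hP h.2)]
  · rcases eq_or_ne (x+1) A with hx1 | hx1
    · rw [if_neg (show ¬(x = A ∧ c1 ≤ A) by omega), zero_add]
      by_cases hQ : c1 ≤ x
      · rw [if_pos (show x + 1 = A ∧ c1 + 1 ≤ A from ⟨hx1, by omega⟩),
          if_pos (show LinkCond A x c1 A' B C from
            ⟨hQ, by omega, Or.inr ⟨h1, Or.inr hx1, hgB, hgC⟩⟩),
          riseL, if_neg (show ¬(A = A') by omega), show A - x = 1 by omega, pow_one,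
          show A - 1 = x by omega]
        ring
      · rw [if_neg (show ¬(LinkCond A x c1 A' B C) by
            rintro ⟨l1, -, (⟨he, -, -⟩ | ⟨-, -, -⟩)⟩ <;> omega),
          if_neg (show ¬(x + 1 = A ∧ c1 + 1 ≤ A) by
            rintro ⟨-, h2⟩; exact hQ (by omega))]
    · rw [if_neg (show ¬(LinkCond A x c1 A' B C) by
          rintro ⟨-, -, (⟨he, -, -⟩ | ⟨-, (h|h), -⟩)⟩ <;> omega),
        if_neg (show ¬(x = A ∧ c1 ≤ A) by omega),
        if_neg (show ¬(x + 1 = A ∧ c1 + 1 ≤ A) by omega)]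
      simp

theorem S_eq_Fval : ∀ (k : ℕ) (a c : Fin k → ℕ) (A' B C n : ℕ), B < n →
    S k a c A' B C n = Fval k a c A' B C := by
  intro k
  induction k with
  | zero =>
    intro a c A' B C n _
    rw [S, Fval]
    rw [show (Fintype.piFinset fun _ : Fin 0 => Finset.range n) = {fun j => j.elim0} from
      Finset.eq_of_subset_of_card_le (fun b _ => by
        simp only [Finset.mem_singleton]; funext j; exact j.elim0)
      (by simp [Fintype.card_piFinset])]
    simp [CondE, riseE]
  | succ k ih =>
    intro a c A' B C n hB
    rw [S, sum_piFinset_snoc]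
    have inner : ∀ x : ℕ,
        (∑ b' ∈ Fintype.piFinset (fun _ : Fin k => Finset.range n),
          if CondE (k+1) a (Fin.snoc b' x) c A' B C
          then (-1 : ℤ) ^ (riseE (k+1) a (Fin.snoc b' x) A' B) else 0)
        = if LinkCond (a (Fin.last k)) x (c (Fin.last k)) A' B C then
            (-1 : ℤ) ^ (riseL (a (Fin.last k)) x A' B) *
              S k (Fin.init a) (Fin.init c) (a (Fin.last k)) x (c (Fin.last k)) n
          else 0 := by
      intro x
      by_cases hL : LinkCond (a (Fin.last k)) x (c (Fin.last k)) A' B C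
      · rw [if_pos hL, S, Finset.mul_sum]
        apply Finset.sum_congr rfl
        intro b' _
        simp only [CondE, riseE, Fin.snoc_last, Fin.init_snoc]
        by_cases hc : CondE k (Fin.init a) b' (Fin.init c) (a (Fin.last k)) x (c (Fin.last k))
        · rw [if_pos ⟨hL, hc⟩, if_pos hc, pow_add]
        · rw [if_neg (by tauto), if_neg hc, mul_zero]
      · rw [if_neg hL]
        apply Finset.sum_eq_zero
        intro b' _
        simp only [CondE, riseE, Fin.snoc_last, Fin.init_snoc]
        rw [if_neg (by tauto)]
    rw [Finset.sum_congr rfl (fun x _ => inner x), Fval]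
    rcases lt_trichotomy (a (Fin.last k)) A' with h1 | h1 | h1
    · -- boundary case
      rw [if_neg (by omega), if_pos h1]
      by_cases hg : a (Fin.last k) < B ∧ c (Fin.last k) < C
      · rw [if_pos hg]
        rw [sum_two_point n (a (Fin.last k)) (by omega)
          (Fval k (Fin.init a) (Fin.init c) (a (Fin.last k)) (a (Fin.last k)) (c (Fin.last k)))
          (-(Fval k (Fin.init a) (Fin.init c) (a (Fin.last k)) (a (Fin.last k) - 1) (c (Fin.last k))))
          (c (Fin.last k) ≤ a (Fin.last k)) (c (Fin.last k) + 1 ≤ a (Fin.last k))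
          (fun hq => by omega) _ ?hf]
        · split_ifs <;> ring
        case hf =>
          intro x hx
          have h := link_eval_boundary (a (Fin.last k)) A' B C (c (Fin.last k)) x h1 hg.1 hg.2
            (fun y => S k (Fin.init a) (Fin.init c) (a (Fin.last k)) y (c (Fin.last k)) n)
          rw [ih (Fin.init a) (Fin.init c) (a (Fin.last k)) (a (Fin.last k)) (c (Fin.last k)) n (by omega),
            ih (Fin.init a) (Fin.init c) (a (Fin.last k)) (a (Fin.last k) - 1) (c (Fin.last k)) n (by omega)] at h
          exact h
      · rw [if_neg hg]
        apply Finset.sum_eq_zero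
        intro x _
        rw [if_neg (by
          rintro ⟨-, -, (⟨he, -, -⟩ | ⟨-, -, hB', hC'⟩)⟩
          · omega
          · exact hg ⟨hB', hC'⟩)]
    · -- same block
      rw [if_pos h1]
      rw [sum_two_point n B hB
        (Fval k (Fin.init a) (Fin.init c) (a (Fin.last k)) B (c (Fin.last k)))
        (-(Fval k (Fin.init a) (Fin.init c) (a (Fin.last k)) (B - 1) (c (Fin.last k))))
        (c (Fin.last k) ≤ B ∧ c (Fin.last k) ≤ C) (c (Fin.last k) + 1 ≤ B ∧ c (Fin.last k) < C)
        (fun hq => by omega) _ ?hf2]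
      · split_ifs <;> ring
      case hf2 =>
        intro x hx
        rw [← h1]
        have h := link_eval_sameblock (a (Fin.last k)) B C (c (Fin.last k)) x
          (fun y => S k (Fin.init a) (Fin.init c) (a (Fin.last k)) y (c (Fin.last k)) n)
        rw [ih (Fin.init a) (Fin.init c) (a (Fin.last k)) B (c (Fin.last k)) n hB,
          ih (Fin.init a) (Fin.init c) (a (Fin.last k)) (B - 1) (c (Fin.last k)) n (by omega)] at h
        exact h
    · rw [if_neg (by omega), if_neg (by omega)]
      apply Finset.sum_eq_zero
      intro x _
      rw [if_neg (by rintro ⟨-, -, (⟨he, -, -⟩ | ⟨hl, -⟩)⟩ <;> omega)]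


section Bridge

lemma riseE_formula : ∀ (k : ℕ) (a b : Fin k → ℕ) (A' B : ℕ),
    riseE k a b A' B = ∑ j : Fin k,
      (if h : (j:ℕ)+1 < k then
        (if a j = a ⟨(j:ℕ)+1, h⟩ then b ⟨(j:ℕ)+1, h⟩ - b j else a j - b j)
       else (if a j = A' then B - b j else a j - b j)) := by
  intro k
  induction k with
  | zero => intro a b A' B; rw [riseE]; simp
  | succ k ih =>
    intro a b A' B
    rw [riseE, Fin.sum_univ_castSucc, ih, add_comm]
    congr 1
    · apply Finset.sum_congr rfl
      intro j _
      rcases lt_or_ge ((j:ℕ)+1) k with h | h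
      · rw [dif_pos h, dif_pos (show ((Fin.castSucc j : Fin (k+1)) : ℕ)+1 < k+1 by
          simp only [Fin.coe_castSucc]; omega)]
        have e1 : (⟨((Fin.castSucc j : Fin (k+1)) : ℕ)+1, by simp only [Fin.coe_castSucc]; omega⟩ : Fin (k+1))
            = Fin.castSucc ⟨(j:ℕ)+1, h⟩ := by ext; simp
        rw [e1]
        simp only [Fin.init]
        rfl
      · rw [dif_neg (by omega), dif_pos (show ((Fin.castSucc j : Fin (k+1)) : ℕ)+1 < k+1 by
          simp only [Fin.coe_castSucc]; omega)]
        have hk : (j:ℕ)+1 = k := by omega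
        have e1 : (⟨((Fin.castSucc j : Fin (k+1)) : ℕ)+1, by simp only [Fin.coe_castSucc]; omega⟩ : Fin (k+1))
            = Fin.last k := by ext; simp [hk]
        rw [e1]
        simp only [Fin.init]
        rfl
    · rw [riseL, dif_neg (by simp)]

lemma CondE_formula : ∀ (k : ℕ) (a b c : Fin k → ℕ) (A' B C : ℕ),
    CondE k a b c A' B C ↔ ∀ j : Fin k,
      (if h : (j:ℕ)+1 < k then
        LinkCond (a j) (b j) (c j) (a ⟨(j:ℕ)+1, h⟩) (b ⟨(j:ℕ)+1, h⟩) (c ⟨(j:ℕ)+1, h⟩)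
       else LinkCond (a j) (b j) (c j) A' B C) := by
  intro k
  induction k with
  | zero => intro a b c A' B C; rw [CondE]; simp
  | succ k ih =>
    intro a b c A' B C
    rw [CondE, ih, Fin.forall_fin_succ']
    constructor
    · rintro ⟨hlast, hrest⟩
      constructor
      · intro j
        have hj := hrest j
        rcases lt_or_ge ((j:ℕ)+1) k with h | h
        · rw [dif_pos h] at hj
          rw [dif_pos (show ((Fin.castSucc j : Fin (k+1)) : ℕ)+1 < k+1 by
            simp only [Fin.coe_castSucc]; omega)]
          have e1 : (⟨((Fin.castSucc j : Fin (k+1)) : ℕ)+1, by simp only [Fin.coe_castSucc]; omega⟩ : Fin (k+1))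
              = Fin.castSucc ⟨(j:ℕ)+1, h⟩ := by ext; simp
          rw [e1]
          exact hj
        · rw [dif_neg (by omega)] at hj
          rw [dif_pos (show ((Fin.castSucc j : Fin (k+1)) : ℕ)+1 < k+1 by
            simp only [Fin.coe_castSucc]; omega)]
          have hk : (j:ℕ)+1 = k := by omega
          have e1 : (⟨((Fin.castSucc j : Fin (k+1)) : ℕ)+1, by simp only [Fin.coe_castSucc]; omega⟩ : Fin (k+1))
              = Fin.last k := by ext; simp [hk]
          rw [e1]
          exact hj
      · rw [dif_neg (by simp)]
        exact hlast
    · rintro ⟨hcast, hlast⟩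
      rw [dif_neg (by simp)] at hlast
      refine ⟨hlast, fun j => ?_⟩
      have hj := hcast j
      rw [dif_pos (show ((Fin.castSucc j : Fin (k+1)) : ℕ)+1 < k+1 by
        simp only [Fin.coe_castSucc]; omega)] at hj
      rcases lt_or_ge ((j:ℕ)+1) k with h | h
      · rw [dif_pos h]
        have e1 : (⟨((Fin.castSucc j : Fin (k+1)) : ℕ)+1, by simp only [Fin.coe_castSucc]; omega⟩ : Fin (k+1))
            = Fin.castSucc ⟨(j:ℕ)+1, h⟩ := by ext; simp
        rw [e1] at hj
        exact hj
      · rw [dif_neg (by omega)]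
        have hk : (j:ℕ)+1 = k := by omega
        have e1 : (⟨((Fin.castSucc j : Fin (k+1)) : ℕ)+1, by simp only [Fin.coe_castSucc]; omega⟩ : Fin (k+1))
            = Fin.last k := by ext; simp [hk]
        rw [e1] at hj
        exact hj

end Bridge


section Root

variable {k : ℕ}

lemma memE_le {a b : Fin (k+1) → ℕ} (ha : Monotone a) (hE : memE a b) :
    ∀ j, b j ≤ a j := by
  have key : ∀ m : ℕ, ∀ j : Fin (k+1), k - (j:ℕ) = m → b j ≤ a j := by
    intro m
    induction m with
    | zero =>
      intro j hj
      have hjv : (j : ℕ) = k := by have := j.2; omega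
      have hj' : j = ⟨k + 1 - 1, Nat.sub_lt (Nat.succ_pos k) Nat.one_pos⟩ := by
        ext; simp [hjv]
      rw [hj']
      rcases hE.2 (Nat.succ_pos k) with h | h <;> omega
    | succ m ih =>
      intro j hj
      have hjk : (j:ℕ) + 1 < k + 1 := by have := j.2; omega
      have he1 : (⟨(j:ℕ), Nat.lt_of_succ_lt hjk⟩ : Fin (k+1)) = j := by ext; rfl
      have hmono := ha (show (⟨(j:ℕ), Nat.lt_of_succ_lt hjk⟩ : Fin (k+1)) ≤ ⟨(j:ℕ)+1, hjk⟩ by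
        simp [Fin.le_def])
      have hnext : b (⟨(j:ℕ)+1, hjk⟩ : Fin (k+1)) ≤ a ⟨(j:ℕ)+1, hjk⟩ := ih _ (by simp; omega)
      rcases eq_or_lt_of_le hmono with heq | hlt
      · have h1 := (hE.1 (j:ℕ) hjk).1 heq
        rw [he1] at h1 heq
        omega
      · have h2 := (hE.1 (j:ℕ) hjk).2 hlt
        rw [he1] at h2
        omega
  intro j; exact key (k - (j:ℕ)) j rfl

lemma memE_mono {a b : Fin (k+1) → ℕ} (ha : Monotone a) (hE : memE a b) :
    Monotone b := by
  rw [Fin.monotone_iff_le_succ]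
  intro i
  have hjk : ((Fin.castSucc i : Fin (k+1)) : ℕ) + 1 < k + 1 := by
    simp only [Fin.coe_castSucc]; omega
  have he1 : (⟨((Fin.castSucc i : Fin (k+1)) : ℕ), Nat.lt_of_succ_lt hjk⟩ : Fin (k+1))
      = Fin.castSucc i := by ext; rfl
  have he2 : (⟨((Fin.castSucc i : Fin (k+1)) : ℕ) + 1, hjk⟩ : Fin (k+1)) = i.succ := by
    ext; simp
  have hmono := ha (Fin.castSucc_le_succ i)
  rcases eq_or_lt_of_le hmono with heq | hlt
  · have h1 := (hE.1 _ hjk).1 (by rw [he1, he2]; exact heq)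
    rw [he1, he2] at h1
    omega
  · have h2 := (hE.1 _ hjk).2 (by rw [he1, he2]; exact hlt)
    rw [he1, he2] at h2
    have := memE_le ha hE (Fin.castSucc i)
    omega

lemma root_iff (a b c : Fin (k+1) → ℕ) (ha : Monotone a) :
    (memE a b ∧ Compat b c) ↔
      CondE (k+1) a b c (a (Fin.last k) + 1) (a (Fin.last k) + 1) (a (Fin.last k) + 1) := by
  rw [CondE_formula]
  constructor
  · rintro ⟨hE, hmc, hcb, hstr⟩
    intro j
    split_ifs with hj
    · -- internal link
      have he1 : (⟨(j:ℕ), Nat.lt_of_succ_lt hj⟩ : Fin (k+1)) = j := by ext; rfl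
      have hle : (⟨(j:ℕ), Nat.lt_of_succ_lt hj⟩ : Fin (k+1)) ≤ ⟨(j:ℕ)+1, hj⟩ := by
        simp [Fin.le_def]
      have hcc := hmc hle
      rw [he1] at hcc
      refine ⟨hcb j, hcc, ?_⟩
      rcases eq_or_lt_of_le (ha hle) with heq | hlt
      · have h1 := (hE.1 (j:ℕ) hj).1 heq
        have himp := hstr (j:ℕ) hj
        rw [he1] at h1 heq himp
        exact Or.inl ⟨heq, h1, himp⟩
      · have h2 := (hE.1 (j:ℕ) hj).2 hlt
        have himp := hstr (j:ℕ) hj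
        rw [he1] at h2 hlt himp
        exact Or.inr ⟨hlt, h2.1, h2.2, himp (lt_of_le_of_lt (memE_le ha hE j) h2.2)⟩
    · -- last position
      have hjl : j = Fin.last k := by ext; have := j.2; simp only [Fin.val_last]; omega
      subst hjl
      have hlast : b (Fin.last k) = a (Fin.last k) ∨ b (Fin.last k) + 1 = a (Fin.last k) := by
        have h := hE.2 (Nat.succ_pos k)
        have he : (⟨k + 1 - 1, Nat.sub_lt (Nat.succ_pos k) Nat.one_pos⟩ : Fin (k+1))
            = Fin.last k := by ext; simp
        rw [he] at h
        exact h
      have hble := memE_le ha hE (Fin.last k)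
      have hc1 := hcb (Fin.last k)
      exact ⟨hcb _, by omega, Or.inr ⟨by omega, hlast, by omega, by omega⟩⟩
  · intro h
    have hcb : ∀ j, c j ≤ b j := by
      intro j
      have := h j
      split_ifs at this with hj
      · exact this.1
      · exact this.1
    have hba : ∀ j, b j ≤ a j := by
      -- downward induction using the link conditions
      have key : ∀ m : ℕ, ∀ j : Fin (k+1), k - (j:ℕ) = m → b j ≤ a j := by
        intro m
        induction m with
        | zero =>
          intro j hj
          have hjl : j = Fin.last k := by
            ext; have := j.2; simp only [Fin.val_last]; omega
          subst hjl
          have hjv : ¬ (((Fin.last k : Fin (k+1)):ℕ) + 1 < k + 1) := by simp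
          have hh := h (Fin.last k)
          rw [dif_neg hjv] at hh
          rcases hh.2.2 with ⟨he, -, -⟩ | ⟨-, hx, -, -⟩
          · omega
          · omega
        | succ m ih =>
          intro j hj
          have hjk : (j:ℕ) + 1 < k + 1 := by have := j.2; omega
          have hh := h j
          rw [dif_pos hjk] at hh
          have hnext : b (⟨(j:ℕ)+1, hjk⟩ : Fin (k+1)) ≤ a ⟨(j:ℕ)+1, hjk⟩ := ih _ (by simp; omega)
          rcases hh.2.2 with ⟨he, hBx, -⟩ | ⟨-, hx, -, -⟩
          · omega
          · omega
      intro j; exact key (k - (j:ℕ)) j rfl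
    refine ⟨⟨?_, ?_⟩, ?_, hcb, ?_⟩
    · -- memE internal
      intro j hj
      have hh := h ⟨j, Nat.lt_of_succ_lt hj⟩
      have hv : ((⟨j, Nat.lt_of_succ_lt hj⟩ : Fin (k+1)) : ℕ) = j := rfl
      rw [dif_pos (by rw [hv]; exact hj)] at hh
      have he2 : (⟨((⟨j, Nat.lt_of_succ_lt hj⟩ : Fin (k+1)) : ℕ) + 1, by rw [hv]; exact hj⟩ : Fin (k+1))
          = ⟨j+1, hj⟩ := by ext; rfl
      rw [he2] at hh
      constructor
      · intro heq
        rcases hh.2.2 with ⟨-, hBx, -⟩ | ⟨hlt, -, -, -⟩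
        · tauto
        · omega
      · intro hlt
        rcases hh.2.2 with ⟨he, -, -⟩ | ⟨-, hx, hab, -⟩
        · omega
        · exact ⟨hx, hab⟩
    · -- memE last
      intro h0
      have hv : ¬ (((Fin.last k : Fin (k+1)) : ℕ) + 1 < k + 1) := by simp
      have hh := h (Fin.last k)
      rw [dif_neg hv] at hh
      have he : (⟨k + 1 - 1, Nat.sub_lt h0 Nat.one_pos⟩ : Fin (k+1)) = Fin.last k := by
        ext; simp
      rw [he]
      rcases hh.2.2 with ⟨hx, -, -⟩ | ⟨-, hx, -, -⟩
      · omega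
      · exact hx
    · -- Monotone c
      rw [Fin.monotone_iff_le_succ]
      intro i
      have hjk : ((Fin.castSucc i : Fin (k+1)) : ℕ) + 1 < k + 1 := by
        simp only [Fin.coe_castSucc]; omega
      have hh := h (Fin.castSucc i)
      rw [dif_pos hjk] at hh
      have he2 : (⟨((Fin.castSucc i : Fin (k+1)) : ℕ) + 1, hjk⟩ : Fin (k+1)) = i.succ := by
        ext; simp
      rw [he2] at hh
      exact hh.2.1
    · -- Compat strictness
      intro j hj hbj
      have hh := h ⟨j, Nat.lt_of_succ_lt hj⟩
      have hv : ((⟨j, Nat.lt_of_succ_lt hj⟩ : Fin (k+1)) : ℕ) = j := rfl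
      rw [dif_pos (by rw [hv]; exact hj)] at hh
      have he2 : (⟨((⟨j, Nat.lt_of_succ_lt hj⟩ : Fin (k+1)) : ℕ) + 1, by rw [hv]; exact hj⟩ : Fin (k+1))
          = ⟨j+1, hj⟩ := by ext; rfl
      rw [he2] at hh
      rcases hh.2.2 with ⟨-, -, himp⟩ | ⟨-, -, -, hcc⟩
      · exact himp hbj
      · exact hcc

end Root


section Final

open Finset

lemma slide_eq_sum_s17 {K : ℕ} (w : Fin K → ℕ) (n : ℕ) (hw : ∀ j, w j < n) :
    slide w = ∑ c ∈ Fintype.piFinset (fun _ : Fin K => Finset.range n),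
      if Compat w c then (∏ j, X (c j) : Pol) else 0 := by
  have hset : {c : Fin K → ℕ | Compat w c}
      = ↑((Fintype.piFinset (fun _ : Fin K => Finset.range n)).filter (fun c => Compat w c)) := by
    ext c
    simp only [Set.mem_setOf_eq, Finset.coe_filter, Fintype.mem_piFinset, Finset.mem_range]
    exact ⟨fun h => ⟨fun j => lt_of_le_of_lt (h.2.1 j) (hw j), h⟩, fun h => h.2⟩
  rw [slide, hset, finsum_mem_coe_finset, Finset.sum_filter]

lemma part1 {k : ℕ} (a : Fin (k+1) → ℕ) (ha : Monotone a) :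
    (∏ j, X (a j) : Pol) = ∑ᶠ b ∈ {b : Fin (k+1) → ℕ | memE a b}, eps a b • slide b := by
  set n := a (Fin.last k) + 2 with hn
  set box := Fintype.piFinset (fun _ : Fin (k+1) => Finset.range n) with hbox
  have hbd : ∀ b : Fin (k+1) → ℕ, memE a b → ∀ j, b j < n := by
    intro b hb j
    exact lt_of_le_of_lt (le_trans (memE_le ha hb j) (ha (Fin.le_last j))) (by omega)
  have hset : {b : Fin (k+1) → ℕ | memE a b} = ↑(box.filter (fun b => memE a b)) := by
    ext b
    simp only [Set.mem_setOf_eq, Finset.coe_filter, hbox, Fintype.mem_piFinset, Finset.mem_range]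
    exact ⟨fun h => ⟨hbd b h, h⟩, fun h => h.2⟩
  rw [hset, finsum_mem_coe_finset, Finset.sum_filter]
  have hslide : ∀ b ∈ box, memE a b →
      slide b = ∑ c ∈ box, if Compat b c then (∏ j, X (c j) : Pol) else 0 := by
    intro b _ hb
    exact slide_eq_sum_s17 b n (fun j => lt_of_le_of_lt (le_trans (memE_le ha hb j)
      (ha (Fin.le_last j))) (by omega))
  calc (∏ j, X (a j) : Pol)
      = ∑ c ∈ box, (if c = a then (1:ℤ) else 0) • (∏ j, X (c j) : Pol) := by
        have : ∀ c ∈ box, (if c = a then (1:ℤ) else 0) • (∏ j, X (c j) : Pol)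
            = if c = a then (∏ j, X (c j) : Pol) else 0 := by
          intro c _; split_ifs <;> simp
        rw [Finset.sum_congr rfl this, Finset.sum_ite_eq' box a (fun c => (∏ j, X (c j) : Pol)),
          if_pos (by
            simp only [hbox, Fintype.mem_piFinset, Finset.mem_range]
            exact fun j => lt_of_le_of_lt (ha (Fin.le_last j)) (by omega))]
    _ = ∑ c ∈ box, (∑ b ∈ box, if memE a b ∧ Compat b c then eps a b else 0)
          • (∏ j, X (c j) : Pol) := by
        apply Finset.sum_congr rfl
        intro c _
        congr 1
        have key : ∀ b ∈ box, (if memE a b ∧ Compat b c then eps a b else 0)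
            = (if CondE (k+1) a b c (a (Fin.last k) + 1) (a (Fin.last k) + 1)
                (a (Fin.last k) + 1) then
                (-1:ℤ) ^ (riseE (k+1) a b (a (Fin.last k) + 1) (a (Fin.last k) + 1)) else 0) := by
          intro b _
          rw [← root_iff a b c ha]
          congr 1
          rw [eps]
          congr 1
          rw [riseE_formula, epsExp]
          apply Finset.sum_congr rfl
          intro j _
          split_ifs with h1 h2 h3
          · rfl
          · rfl
          · exfalso
            have hjl : (j:ℕ) = k := by have := j.2; omega
            have hj' : j = Fin.last k := by ext; simp [hjl]
            rw [hj'] at h3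
            omega
          · rfl
        rw [Finset.sum_congr rfl key]
        have := S_eq_Fval (k+1) a c (a (Fin.last k) + 1) (a (Fin.last k) + 1)
          (a (Fin.last k) + 1) n (by omega)
        rw [S] at this
        rw [← hbox] at this
        rw [this, Fval_root (k+1) a c (a (Fin.last k) + 1) ha
          (fun j => le_trans (ha (Fin.le_last j)) (by omega))]
    _ = ∑ c ∈ box, ∑ b ∈ box,
          (if memE a b ∧ Compat b c then eps a b • (∏ j, X (c j) : Pol) else 0) := by
        apply Finset.sum_congr rfl
        intro c _
        rw [Finset.sum_smul]
        apply Finset.sum_congr rfl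
        intro b _
        split_ifs <;> simp
    _ = ∑ b ∈ box, ∑ c ∈ box,
          (if memE a b ∧ Compat b c then eps a b • (∏ j, X (c j) : Pol) else 0) :=
        Finset.sum_comm
    _ = ∑ b ∈ box, if memE a b then eps a b • slide b else 0 := by
        apply Finset.sum_congr rfl
        intro b hb
        by_cases hmb : memE a b
        · rw [if_pos hmb, hslide b hb hmb, Finset.smul_sum]
          apply Finset.sum_congr rfl
          intro c _
          by_cases hc : Compat b c
          · rw [if_pos ⟨hmb, hc⟩, if_pos hc]
          · rw [if_neg (by tauto), if_neg hc, smul_zero]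
        · rw [if_neg hmb]
          apply Finset.sum_eq_zero
          intro c _
          rw [if_neg (by tauto)]

end Final


/-- the signed multiplicity-free slide expansion of a monomial:
`x_{a₁}⋯x_{a_k} = Σ_{b ∈ E(a)} ε(b)·𝔉_b`; in particular all coefficients of the slide
expansion of a monomial lie in `{−1,0,1}`. -/
theorem stmt_17 {k : ℕ} (hk : 0 < k) (a : Fin k → ℕ) (ha : Monotone a) :
    ((∏ j, X (a j) : Pol) = ∑ᶠ b ∈ {b : Fin k → ℕ | memE a b}, eps a b • slide b) ∧
    ∃ c : (Σ n : ℕ, {e : Fin n → ℕ // Monotone e}) → ℤ,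
      (∀ e, c e = -1 ∨ c e = 0 ∨ c e = 1) ∧
      {e | c e ≠ 0}.Finite ∧
      (∏ j, X (a j) : Pol) = ∑ᶠ e, c e • slide e.2.1 := by
  obtain ⟨k', rfl⟩ : ∃ k', k = k' + 1 := ⟨k - 1, by omega⟩
  refine ⟨part1 a ha, ?_⟩
  set n := a (Fin.last k') + 2 with hn
  set box := Fintype.piFinset (fun _ : Fin (k'+1) => Finset.range n) with hbox
  set Es := box.filter (fun b => memE a b) with hEs
  have hbd : ∀ b : Fin (k'+1) → ℕ, memE a b → ∀ j, b j < n := by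
    intro b hb j
    exact lt_of_le_of_lt (le_trans (memE_le ha hb j) (ha (Fin.le_last j))) (by omega)
  set cf : (Σ N : ℕ, {e : Fin N → ℕ // Monotone e}) → ℤ :=
    fun e => if h : e.1 = k' + 1 then
      (if memE a (fun j => e.2.1 (Fin.cast h.symm j))
       then eps a (fun j => e.2.1 (Fin.cast h.symm j)) else 0)
    else 0 with hcf
  set m : (Fin (k'+1) → ℕ) → (Σ N : ℕ, {e : Fin N → ℕ // Monotone e}) :=
    fun b => if hb : Monotone b then ⟨k'+1, ⟨b, hb⟩⟩ else ⟨k'+1, ⟨a, ha⟩⟩ with hm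
  have heps : ∀ b : Fin (k'+1) → ℕ, eps a b = 1 ∨ eps a b = -1 := by
    intro b
    rcases Nat.even_or_odd (epsExp a b) with he | ho
    · exact Or.inl he.neg_one_pow
    · exact Or.inr ho.neg_one_pow
  have hmval : ∀ b : Fin (k'+1) → ℕ, (hb : Monotone b) → m b = ⟨k'+1, ⟨b, hb⟩⟩ := by
    intro b hb
    rw [hm]
    exact dif_pos hb
  have hcfval : ∀ (b : Fin (k'+1) → ℕ) (hb : Monotone b),
      cf ⟨k'+1, ⟨b, hb⟩⟩ = if memE a b then eps a b else 0 := by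
    intro b hb
    simp only [hcf]
    rw [dif_pos trivial]
    rfl
  have hsub : {e | cf e ≠ 0} ⊆ ↑(Es.image m) := by
    rintro ⟨N, b0, hb0⟩ he
    simp only [Set.mem_setOf_eq, hcf] at he
    by_cases h : N = k' + 1
    · subst h
      rw [dif_pos rfl] at he
      have hb0' : (fun j => b0 (Fin.cast rfl j)) = b0 := rfl
      rw [hb0'] at he
      have hmem : memE a b0 := by
        by_contra hcon
        rw [if_neg hcon] at he
        exact he rfl
      simp only [Finset.coe_image, Set.mem_image, Finset.mem_coe]
      refine ⟨b0, ?_, ?_⟩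
      · rw [hEs, Finset.mem_filter]
        refine ⟨?_, hmem⟩
        simp only [hbox, Fintype.mem_piFinset, Finset.mem_range]
        exact hbd b0 hmem
      · exact hmval b0 hb0
    · rw [dif_neg h] at he
      exact absurd rfl he
  refine ⟨cf, ?_, ?_, ?_⟩
  · intro e
    simp only [hcf]
    split_ifs with h1 h2
    · rcases heps _ with h3 | h3 <;> rw [h3] <;> tauto
    · tauto
    · tauto
  · exact Set.Finite.subset (Es.image m).finite_toSet hsub
  · have hsupp : Function.support (fun e => cf e • slide e.2.1) ⊆ ↑(Es.image m) := by
      intro e he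
      apply hsub
      simp only [Set.mem_setOf_eq]
      intro hc
      apply he
      simp [hc]
    rw [finsum_eq_finset_sum_of_support_subset _ hsupp]
    rw [Finset.sum_image (by
      intro b hb b' hb' hmm
      have hmemb : memE a b := (Finset.mem_filter.mp hb).2
      have hmemb' : memE a b' := (Finset.mem_filter.mp hb').2
      rw [hmval b (memE_mono ha hmemb), hmval b' (memE_mono ha hmemb')] at hmm
      have h2 := (Sigma.mk.inj_iff.mp hmm).2
      have h3 := eq_of_heq h2
      exact congrArg Subtype.val h3)]
    have hterm : ∀ b ∈ Es, cf (m b) • slide ((m b).2.1) = eps a b • slide b := by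
      intro b hb
      have hmemb : memE a b := (Finset.mem_filter.mp hb).2
      rw [hmval b (memE_mono ha hmemb)]
      rw [hcfval b (memE_mono ha hmemb), if_pos hmemb]
    rw [Finset.sum_congr rfl hterm]
    have hset : {b : Fin (k'+1) → ℕ | memE a b} = ↑Es := by
      ext b
      simp only [Set.mem_setOf_eq, hEs, Finset.coe_filter, Set.mem_setOf_eq, hbox,
        Fintype.mem_piFinset, Finset.mem_range]
      exact ⟨fun h => ⟨hbd b h, h⟩, fun h => h.2⟩
    rw [part1 a ha, hset, finsum_mem_coe_finset]
end
end
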